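/- arXiv:2503.03366 — 7 statements merged into one kernel-verified Lean document; each statement's English description precedes it below -/
import Mathlib

section
/- For any nonzero elements a, b in F = ℝ((t)), the four-dimensional quadratic form ⟨1, a, b, -ab⟩ over F is isotropic. -/
open PowerSeries

-- step 1: adic completeness of power series
theorem myHaus (K : Type*) [Field K] : IsHausdorff (Ideal.span {(X : K⟦X⟧)}) K⟦X⟧ := by
  refine ⟨fun x hx => ?_⟩
  · ext n
    have h := hx (n+1)
    rw [SModEq.zero, smul_eq_mul, Ideal.mul_top, Ideal.span_singleton_pow,
      Ideal.mem_span_singleton, X_pow_dvd_iff] at h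
    simpa using h n (by omega)
theorem myPrec (K : Type*) [Field K] : IsPrecomplete (Ideal.span {(X : K⟦X⟧)}) K⟦X⟧ := by
  refine ⟨fun f hf => ?_⟩
  · refine ⟨PowerSeries.mk fun i => coeff i (f (i+1)), fun n => ?_⟩
    rw [SModEq.sub_mem, smul_eq_mul, Ideal.mul_top, Ideal.span_singleton_pow,
      Ideal.mem_span_singleton, X_pow_dvd_iff]
    intro i hi
    have h := hf (show i+1 ≤ n by omega)
    rw [SModEq.sub_mem, smul_eq_mul, Ideal.mul_top, Ideal.span_singleton_pow,
      Ideal.mem_span_singleton, X_pow_dvd_iff] at h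
    have := h i (by omega)
    simp only [map_sub, coeff_mk] at this ⊢
    linear_combination -this

theorem myAdic (K : Type*) [Field K] : IsAdicComplete (Ideal.span {(X : K⟦X⟧)}) K⟦X⟧ :=
  letI := myHaus K; letI := myPrec K; ⟨⟩

theorem mySq (u : ℝ⟦X⟧) (hc : 0 < constantCoeff u) : ∃ s : ℝ⟦X⟧, s * s = u := by
  haveI := myAdic ℝ
  set I : Ideal ℝ⟦X⟧ := Ideal.span {(X : ℝ⟦X⟧)}
  set c := constantCoeff u with hcdef
  have hmonic : (Polynomial.X ^ 2 - Polynomial.C u).Monic :=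
    Polynomial.monic_X_pow_sub_C u (by norm_num)
  have h1 : (Polynomial.X ^ 2 - Polynomial.C u).eval (PowerSeries.C (R := ℝ) (Real.sqrt c)) ∈ I := by
    rw [Ideal.mem_span_singleton, X_dvd_iff]
    simp [Real.mul_self_sqrt hc.le, pow_two, ← hcdef]
  have h2 : IsUnit (Ideal.Quotient.mk I
      ((Polynomial.X ^ 2 - Polynomial.C u).derivative.eval (PowerSeries.C (R := ℝ) (Real.sqrt c)))) := by
    apply IsUnit.map
    rw [isUnit_iff_constantCoeff]
    simp only [Polynomial.derivative_sub, Polynomial.derivative_C, Polynomial.derivative_X_pow]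
    simp only [Polynomial.eval_sub, Polynomial.eval_zero, Polynomial.eval_mul, sub_zero]
    simp only [map_mul, map_pow]
    simp [Real.sqrt_pos.mpr hc, (Real.sqrt_pos.mpr hc).ne']
    have : ((2 : ℝ⟦X⟧)) = PowerSeries.C (R := ℝ) 2 := (map_ofNat (PowerSeries.C (R := ℝ)) 2).symm
    rw [this, PowerSeries.constantCoeff_C]
    norm_num
  obtain ⟨s, hs, -⟩ := HenselianRing.is_henselian (I := I)
    (Polynomial.X ^ 2 - Polynomial.C u) hmonic _ h1 h2
  refine ⟨s, ?_⟩
  have := hs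
  simp only [Polynomial.IsRoot, Polynomial.eval_sub, Polynomial.eval_pow, Polynomial.eval_X,
    Polynomial.eval_C, sub_eq_zero] at this
  rw [← this, pow_two]

open HahnSeries in
theorem myClassify (a : LaurentSeries ℝ) (ha : a ≠ 0) :
    (∃ s : LaurentSeries ℝ, a = s * s) ∨ (∃ s : LaurentSeries ℝ, a = -(s * s)) ∨
    (∃ s : LaurentSeries ℝ, (single (1:ℤ) (1:ℝ)) * a = s * s) ∨
    (∃ s : LaurentSeries ℝ, (single (1:ℤ) (1:ℝ)) * a = -(s * s)) := by
  have hu : (single a.order (1:ℝ) : LaurentSeries ℝ) * (a.powerSeriesPart : LaurentSeries ℝ) = a :=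
    a.single_order_mul_powerSeriesPart
  have hcne : constantCoeff a.powerSeriesPart ≠ 0 := by
    rw [← PowerSeries.coeff_zero_eq_constantCoeff, a.powerSeriesPart_coeff 0]
    simpa using (HahnSeries.coeff_order_eq_zero.not.mpr ha)
  have key : ∃ v : LaurentSeries ℝ,
      (v * v = (a.powerSeriesPart : LaurentSeries ℝ)) ∨
      (v * v = -(a.powerSeriesPart : LaurentSeries ℝ)) := by
    rcases lt_or_gt_of_ne hcne with h | h
    · obtain ⟨s, hs⟩ := mySq (-a.powerSeriesPart) (by simpa using h)
      refine ⟨(s : LaurentSeries ℝ), Or.inr ?_⟩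
      rw [← map_mul, hs, map_neg]
    · obtain ⟨s, hs⟩ := mySq a.powerSeriesPart h
      refine ⟨(s : LaurentSeries ℝ), Or.inl ?_⟩
      rw [← map_mul, hs]
  obtain ⟨v, hv⟩ := key
  rcases Int.even_or_odd a.order with ⟨k, hk⟩ | ⟨k, hk⟩
  · have hsingle : (single a.order (1:ℝ) : LaurentSeries ℝ) = single k 1 * single k 1 := by
      rw [single_mul_single, mul_one, ← hk]
    rcases hv with h | h
    · refine Or.inl ⟨single k 1 * v, ?_⟩
      rw [← hu, hsingle]
      linear_combination (-(single (k:ℤ) (1:ℝ) * single (k:ℤ) (1:ℝ) : LaurentSeries ℝ)) * h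
    · refine Or.inr (Or.inl ⟨single k 1 * v, ?_⟩)
      rw [← hu, hsingle]
      linear_combination (single (k:ℤ) (1:ℝ) * single (k:ℤ) (1:ℝ) : LaurentSeries ℝ) * h
  · have hsingle : (single (1:ℤ) (1:ℝ) : LaurentSeries ℝ) * single a.order 1
        = single (k+1) 1 * single (k+1) 1 := by
      rw [single_mul_single, single_mul_single, mul_one, hk]
      congr 1
      ring
    rcases hv with h | h
    · refine Or.inr (Or.inr (Or.inl ⟨single (k+1) 1 * v, ?_⟩))
      rw [← hu, ← mul_assoc, hsingle]
      linear_combination (-(single ((k:ℤ)+1) (1:ℝ) * single ((k:ℤ)+1) (1:ℝ) : LaurentSeries ℝ)) * h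
    · refine Or.inr (Or.inr (Or.inr ⟨single (k+1) 1 * v, ?_⟩))
      rw [← hu, ← mul_assoc, hsingle]
      linear_combination (single ((k:ℤ)+1) (1:ℝ) * single ((k:ℤ)+1) (1:ℝ) : LaurentSeries ℝ) * h

/-- For any nonzero `a, b` in `F = ℝ((t))`, the quadratic form `⟨1, a, b, -ab⟩`
is isotropic over `F`: it has a nontrivial zero. -/
theorem laurentSeries_real_pfister_neighbor_isotropic
    (a b : LaurentSeries ℝ) (ha : a ≠ 0) (hb : b ≠ 0) :
    ∃ x y z w : LaurentSeries ℝ, ¬(x = 0 ∧ y = 0 ∧ z = 0 ∧ w = 0) ∧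
      x ^ 2 + a * y ^ 2 + b * z ^ 2 - a * b * w ^ 2 = 0 := by
  have ht : (HahnSeries.single (1:ℤ) (1:ℝ) : LaurentSeries ℝ) ≠ 0 :=
    HahnSeries.single_ne_zero one_ne_zero
  set t : LaurentSeries ℝ := HahnSeries.single (1:ℤ) (1:ℝ) with htdef
  rcases myClassify a ha with ⟨s, hs⟩ | ⟨s, hs⟩ | ⟨s, hs⟩ | ⟨s, hs⟩
  · exact ⟨0, 0, s, 1, by simp, by rw [hs]; ring⟩
  · exact ⟨s, 1, 0, 0, by simp, by rw [hs]; ring⟩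
  · rcases myClassify b hb with ⟨r, hr⟩ | ⟨r, hr⟩ | ⟨r, hr⟩ | ⟨r, hr⟩
    · exact ⟨0, r, 0, 1, by simp, by rw [hr]; ring⟩
    · exact ⟨r, 0, 1, 0, by simp, by rw [hr]; ring⟩
    · have hq : (s*r/t)^2 = a*b := by
        rw [div_pow, div_eq_iff (pow_ne_zero 2 ht)]
        linear_combination (-(r*r)) * hs + (-(t*a)) * hr
      exact ⟨s*r/t, 0, 0, 1, by simp, by linear_combination hq⟩
    · have hq : (s*r/t)^2 = -(a*b) := by
        rw [div_pow, div_eq_iff (pow_ne_zero 2 ht)]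
        linear_combination (-(r*r)) * hs + (t*a) * hr
      exact ⟨0, b, s*r/t, 0, by simp [hb], by linear_combination b * hq⟩
  · rcases myClassify b hb with ⟨r, hr⟩ | ⟨r, hr⟩ | ⟨r, hr⟩ | ⟨r, hr⟩
    · exact ⟨0, r, 0, 1, by simp, by rw [hr]; ring⟩
    · exact ⟨r, 0, 1, 0, by simp, by rw [hr]; ring⟩
    · have hq : (s*r/t)^2 = -(a*b) := by
        rw [div_pow, div_eq_iff (pow_ne_zero 2 ht)]
        linear_combination (r*r) * hs + (t*a) * hr
      exact ⟨0, b, s*r/t, 0, by simp [hb], by linear_combination b * hq⟩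
    · have hq : (s*r/t)^2 = a*b := by
        rw [div_pow, div_eq_iff (pow_ne_zero 2 ht)]
        linear_combination (r*r) * hs + (-(t*a)) * hr
      exact ⟨s*r/t, 0, 0, 1, by simp, by linear_combination hq⟩
end

section
/- If F is a formally real Pythagorean field, then the field of formal Laurent series F((t)) is also formally real and Pythagorean. -/
open HahnSeries Finset

section Sqrt

variable {F : Type*} [Field F]

/-- Auxiliary coefficients of the square root of a power series with constant
coefficient `1`. -/
noncomputable def sqrtAux (u : PowerSeries F) : ℕ → F
  | 0 => 1
  | (m + 1) => ((PowerSeries.coeff (m + 1)) u -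
      ∑ i ∈ (Finset.range m).attach, sqrtAux u (i.1 + 1) * sqrtAux u (m - i.1)) / 2
  termination_by n => n
  decreasing_by
  · have := i.2; simp only [Finset.mem_range] at this; omega
  · have := i.2; simp only [Finset.mem_range] at this; omega

lemma sqrtAux_zero (u : PowerSeries F) : sqrtAux u 0 = 1 := by
  simp [sqrtAux]

lemma sqrtAux_succ (u : PowerSeries F) (m : ℕ) :
    sqrtAux u (m + 1) = ((PowerSeries.coeff (m + 1)) u -
      ∑ i ∈ Finset.range m, sqrtAux u (i + 1) * sqrtAux u (m - i)) / 2 := by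
  rw [sqrtAux, ← Finset.sum_attach (Finset.range m) (fun i => sqrtAux u (i + 1) * sqrtAux u (m - i))]

lemma sq_sqrt (h2 : (2 : F) ≠ 0) (u : PowerSeries F)
    (hu : PowerSeries.constantCoeff u = 1) :
    (PowerSeries.mk (sqrtAux u)) ^ 2 = u := by
  ext n
  rw [pow_two, PowerSeries.coeff_mul, Finset.Nat.sum_antidiagonal_eq_sum_range_succ_mk]
  simp only [PowerSeries.coeff_mk]
  cases n with
  | zero => simp [sqrtAux_zero, PowerSeries.coeff_zero_eq_constantCoeff, hu]
  | succ m =>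
    rw [Finset.sum_range_succ, Finset.sum_range_succ']
    simp only [Nat.sub_self, sqrtAux_zero, mul_one, one_mul, Nat.sub_zero]
    have hmid : ∀ i ∈ Finset.range m,
        sqrtAux u (i + 1) * sqrtAux u (m + 1 - (i + 1)) =
          sqrtAux u (i + 1) * sqrtAux u (m - i) := by
      intro i hi
      congr 2
      omega
    rw [Finset.sum_congr rfl hmid, sqrtAux_succ]
    field_simp
    ring

end Sqrt

section Key

variable {F : Type*} [Field F]
variable (hFR : ¬ IsSumSq (-1 : F)) (hPy : ∀ x : F, IsSumSq x → IsSquare x)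

include hFR in
lemma myTwo_ne_zero : (2 : F) ≠ 0 := by
  intro h2
  apply hFR
  have : (-1 : F) = 1 * 1 + 0 := by
    have : (1 : F) + 1 = 0 := by rw [← h2]; norm_num
    linear_combination -this
  rw [this]
  exact IsSumSq.sq_add 1 IsSumSq.zero

include hFR hPy in
/-- In a formally real Pythagorean field, a square plus a nonzero sum of squares
is nonzero. -/
lemma sq_add_ne_zero {a c : F} (hc : IsSumSq c) (hc0 : c ≠ 0) : a * a + c ≠ 0 := by
  obtain ⟨d, rfl⟩ := hPy c hc
  have hd : d ≠ 0 := by rintro rfl; simp at hc0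
  intro h
  apply hFR
  have : (-1 : F) = (a / d) * (a / d) + 0 := by
    field_simp
    linear_combination -h
  rw [this]
  exact IsSumSq.sq_add _ IsSumSq.zero

/-- If all coefficients below `m` vanish and the coefficient at `m` is nonzero,
then the order equals `m`. -/
lemma order_eq_of_coeff {s : LaurentSeries F} {m : ℤ}
    (h1 : s.coeff m ≠ 0) (h2 : ∀ k < m, s.coeff k = 0) : s.order = m := by
  have hs : s ≠ 0 := ne_zero_of_coeff_ne_zero h1
  refine le_antisymm (order_le_of_coeff_ne_zero h1) ?_
  by_contra h
  push_neg at h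
  exact (leadingCoeff_ne_zero.mpr hs) (leadingCoeff_eq.trans (h2 _ h))

include hFR hPy in
/-- Structure of sums of squares in the Laurent series field. -/
lemma laurent_sumsq_struct {s : LaurentSeries F} (h : IsSumSq s) :
    s = 0 ∨ (s ≠ 0 ∧ Even s.order ∧ IsSumSq s.leadingCoeff) := by
  induction h with
  | zero => exact Or.inl rfl
  | @sq_add a t ht ih =>
    rcases eq_or_ne a 0 with rfl | ha
    · simpa using ih
    have haa : a * a ≠ 0 := mul_ne_zero ha ha
    have horder : (a * a).order = a.order + a.order := order_mul ha ha
    have hlc : (a * a).coeff (a.order + a.order) = a.leadingCoeff * a.leadingCoeff :=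
      coeff_mul_order_add_order a a
    rcases ih with rfl | ⟨ht0, hteven, htsumsq⟩
    · -- t = 0
      right
      rw [add_zero]
      refine ⟨haa, ⟨a.order, horder⟩, ?_⟩
      rw [leadingCoeff_eq, horder, hlc]
      have : a.leadingCoeff * a.leadingCoeff =
          a.leadingCoeff * a.leadingCoeff + 0 := by ring
      rw [this]
      exact IsSumSq.sq_add _ IsSumSq.zero
    · -- t ≠ 0
      have hlca : a.leadingCoeff ≠ 0 := leadingCoeff_ne_zero.mpr ha
      have hlct : t.leadingCoeff ≠ 0 := leadingCoeff_ne_zero.mpr ht0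
      rcases lt_trichotomy ((a * a).order) t.order with hlt | heq | hgt
      · -- square dominates
        have hc1 : (a * a + t).coeff ((a * a).order) =
            a.leadingCoeff * a.leadingCoeff := by
          rw [coeff_add, coeff_eq_zero_of_lt_order hlt, add_zero, ← horder] at *
          rw [hlc]
        have hcne : (a * a + t).coeff ((a * a).order) ≠ 0 := by
          rw [hc1]; exact mul_ne_zero hlca hlca
        have hc2 : ∀ k < (a * a).order, (a * a + t).coeff k = 0 := by
          intro k hk
          rw [coeff_add, coeff_eq_zero_of_lt_order hk,
            coeff_eq_zero_of_lt_order (hk.trans hlt), add_zero]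
        have hordeq := order_eq_of_coeff hcne hc2
        right
        refine ⟨ne_zero_of_coeff_ne_zero hcne, ?_, ?_⟩
        · rw [hordeq, horder]; exact ⟨a.order, rfl⟩
        · rw [leadingCoeff_eq, hordeq, hc1]
          have : a.leadingCoeff * a.leadingCoeff =
              a.leadingCoeff * a.leadingCoeff + 0 := by ring
          rw [this]
          exact IsSumSq.sq_add _ IsSumSq.zero
      · -- equal orders
        have hc1 : (a * a + t).coeff t.order =
            a.leadingCoeff * a.leadingCoeff + t.leadingCoeff := by
          rw [coeff_add, ← heq, horder, hlc, ← horder, heq, ← leadingCoeff_eq]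
        have hcne : (a * a + t).coeff t.order ≠ 0 := by
          rw [hc1]
          exact sq_add_ne_zero hFR hPy htsumsq hlct
        have hc2 : ∀ k < t.order, (a * a + t).coeff k = 0 := by
          intro k hk
          rw [coeff_add, coeff_eq_zero_of_lt_order hk,
            coeff_eq_zero_of_lt_order (heq ▸ hk), add_zero]
        have hordeq := order_eq_of_coeff hcne hc2
        right
        refine ⟨ne_zero_of_coeff_ne_zero hcne, ?_, ?_⟩
        · rw [hordeq]; exact hteven
        · rw [leadingCoeff_eq, hordeq, hc1]
          exact IsSumSq.sq_add _ htsumsq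
      · -- t dominates
        have hc1 : (a * a + t).coeff t.order = t.leadingCoeff := by
          rw [coeff_add, coeff_eq_zero_of_lt_order hgt, zero_add, ← leadingCoeff_eq]
        have hcne : (a * a + t).coeff t.order ≠ 0 := by rw [hc1]; exact hlct
        have hc2 : ∀ k < t.order, (a * a + t).coeff k = 0 := by
          intro k hk
          rw [coeff_add, coeff_eq_zero_of_lt_order hk,
            coeff_eq_zero_of_lt_order (hk.trans hgt), add_zero]
        have hordeq := order_eq_of_coeff hcne hc2
        right
        refine ⟨ne_zero_of_coeff_ne_zero hcne, ?_, ?_⟩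
        · rw [hordeq]; exact hteven
        · rw [leadingCoeff_eq, hordeq, hc1]
          exact htsumsq

end Key

/-- If `F` is a formally real Pythagorean field, then the Laurent series field
`F((t))` is also formally real and Pythagorean. -/
theorem laurentSeries_formallyReal_pythagorean (F : Type*) [Field F]
    (hFR : ¬ IsSumSq (-1 : F)) (hPy : ∀ x : F, IsSumSq x → IsSquare x) :
    ¬ IsSumSq (-1 : LaurentSeries F) ∧
      ∀ x : LaurentSeries F, IsSumSq x → IsSquare x := by
  have h2 : (2 : F) ≠ 0 := myTwo_ne_zero hFR
  constructor
  · intro h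
    rcases laurent_sumsq_struct hFR hPy h with h0 | ⟨_, _, hsumsq⟩
    · exact one_ne_zero (neg_eq_zero.mp h0)
    · apply hFR
      have : (-1 : LaurentSeries F).leadingCoeff = -1 := by
        rw [leadingCoeff_eq, order_neg, order_one, coeff_neg, coeff_one, if_pos rfl]
      rwa [this] at hsumsq
  · intro s hs
    rcases laurent_sumsq_struct hFR hPy hs with rfl | ⟨hs0, ⟨n, hn⟩, hsumsq⟩
    · exact ⟨0, by simp⟩
    obtain ⟨d, hd⟩ := hPy s.leadingCoeff hsumsq
    have hlcne : s.leadingCoeff ≠ 0 := leadingCoeff_ne_zero.mpr hs0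
    have hdne : d ≠ 0 := by rintro rfl; simp at hd; exact hs0 hd
    have hdinv : d⁻¹ ≠ 0 := inv_ne_zero hdne
    -- the normalized series
    set A : LaurentSeries F := single (-n) d⁻¹ with hA
    have hAne : A ≠ 0 := single_ne_zero hdinv
    have hAAne : A * A ≠ 0 := mul_ne_zero hAne hAne
    set w : LaurentSeries F := A * A * s with hw
    have hwne : w ≠ 0 := mul_ne_zero hAAne hs0
    have hAAorder : (A * A).order = -n + -n := by
      rw [order_mul hAne hAne, hA, order_single hdinv]
    have hworder : w.order = 0 := by
      rw [hw, order_mul hAAne hs0, hAAorder, hn]; ring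
    have hAAlc : (A * A).leadingCoeff = d⁻¹ * d⁻¹ := by
      rw [leadingCoeff_eq, hAAorder, ← order_single (a := (-n : ℤ)) hdinv, ← hA,
        coeff_mul_order_add_order, hA, leadingCoeff_of_single]
    have hwlc : w.leadingCoeff = 1 := by
      have hco : w.coeff ((A * A).order + s.order) =
          (A * A).leadingCoeff * s.leadingCoeff := coeff_mul_order_add_order (A * A) s
      have h0 : (A * A).order + s.order = 0 := by rw [hAAorder, hn]; ring
      rw [leadingCoeff_eq, hworder, ← h0, hco, hAAlc, hd]
      field_simp
    -- w is a power series with constant coefficient 1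
    set u : PowerSeries F := w.powerSeriesPart with hu
    have hw_eq : (HahnSeries.ofPowerSeries ℤ F) u = w := by
      have := w.single_order_mul_powerSeriesPart
      rwa [hworder, single_zero_one, one_mul] at this
    have huc : PowerSeries.constantCoeff u = 1 := by
      have hpc := w.powerSeriesPart_coeff 0
      rw [hworder, Nat.cast_zero, zero_add] at hpc
      rw [← PowerSeries.coeff_zero_eq_constantCoeff, hu, hpc,
        ← hworder, ← leadingCoeff_eq, hwlc]
    obtain ⟨r, hr⟩ : ∃ r : PowerSeries F, r ^ 2 = u := ⟨_, sq_sqrt h2 u huc⟩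
    -- assemble the square root of s
    refine ⟨single n d * (HahnSeries.ofPowerSeries ℤ F) r, ?_⟩
    have hrw : (HahnSeries.ofPowerSeries ℤ F) r * (HahnSeries.ofPowerSeries ℤ F) r = w := by
      rw [← map_mul, ← pow_two, hr, hw_eq]
    have hsingle : single (n : ℤ) d * A = 1 := by
      rw [hA, single_mul_single, add_neg_cancel, mul_inv_cancel₀ hdne, single_zero_one]
    calc s = 1 * 1 * s := by ring
    _ = (single (n : ℤ) d * A) * (single (n : ℤ) d * A) * s := by rw [hsingle]
    _ = (single (n : ℤ) d * single (n : ℤ) d) * w := by rw [hw]; ring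
    _ = single (n : ℤ) d * (HahnSeries.ofPowerSeries ℤ F) r *
        (single (n : ℤ) d * (HahnSeries.ofPowerSeries ℤ F) r) := by rw [← hrw]; ring
end

section
/- Let (A, σ) be a central simple algebra with orthogonal involution over a formally real field F such that σ is strongly anisotropic. Then there exists an algebraic field extension K/F such that K is formally real and Pythagorean, σ_K is strongly anisotropic, and for every proper algebraic extension L/K the involution σ_L is weakly isotropic. -/
set_option synthInstance.maxHeartbeats 1000000
set_option maxHeartbeats 4000000
open TensorProduct

section Aux
variable {F : Type*} [Field F] {A : Type*} [Ring A] [Algebra F A]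

theorem sig_one (σ : A →ₗ[F] A) (hanti : ∀ x y : A, σ (x * y) = σ y * σ x)
    (hinv : ∀ x : A, σ (σ x) = x) : σ 1 = 1 := by
  have h : ∀ y : A, σ 1 * y = y := by
    intro y
    conv_lhs => rw [← hinv y]
    rw [← hanti, mul_one, hinv]
  simpa using h 1

variable (K : Type*) [Field K] [Algebra F K]

/-- the induced map on a base change -/
noncomputable def sigT (σ : A →ₗ[F] A) : A ⊗[F] K →ₗ[F] A ⊗[F] K :=
  TensorProduct.map σ (LinearMap.id : K →ₗ[F] K)

variable {K}

@[simp] theorem sigT_tmul (σ : A →ₗ[F] A) (a : A) (c : K) :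
    sigT K σ (a ⊗ₜ c) = σ a ⊗ₜ c := rfl

theorem sigT_mul (σ : A →ₗ[F] A) (hanti : ∀ x y : A, σ (x * y) = σ y * σ x)
    (u v : A ⊗[F] K) :
    sigT K σ (u * v) = sigT K σ v * sigT K σ u := by
  induction u using TensorProduct.induction_on with
  | zero => simp
  | tmul a c =>
    induction v using TensorProduct.induction_on with
    | zero => simp
    | tmul b d =>
      simp [Algebra.TensorProduct.tmul_mul_tmul, hanti, mul_comm c d]
    | add v1 v2 h1 h2 => simp [mul_add, add_mul, h1, h2]
  | add u1 u2 h1 h2 => simp [mul_add, add_mul, h1, h2]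

theorem sigT_one (σ : A →ₗ[F] A) (hσ1 : σ 1 = 1) : sigT K σ 1 = 1 := by
  rw [Algebra.TensorProduct.one_def]
  simp [hσ1]

variable (K) in
/-- strong anisotropy of the base change to `K` -/
def StrAniso (σ : A →ₗ[F] A) : Prop :=
  ∀ (n : ℕ), 0 < n → ∀ z : Fin n → A ⊗[F] K,
    (∀ m, z m ≠ 0) → ∑ m, sigT K σ (z m) * z m ≠ 0

theorem StrAniso.elim {σ : A →ₗ[F] A}
    (h : StrAniso K σ) {ι : Type*} [Fintype ι] (v : ι → A ⊗[F] K)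
    (hsum : ∑ i, sigT K σ (v i) * v i = 0) (i₀ : ι) (hne : v i₀ ≠ 0) : False := by
  classical
  set s : Finset ι := Finset.univ.filter (fun i => v i ≠ 0) with hs
  have hi₀ : i₀ ∈ s := by simp [hs, hne]
  have hcard : 0 < s.card := Finset.card_pos.mpr ⟨i₀, hi₀⟩
  let eqv : Fin s.card ≃ {x // x ∈ s} := (s.equivFin).symm
  refine h s.card hcard (fun m => v (eqv m)) (fun m => ?_) ?_
  · exact (Finset.mem_filter.mp (eqv m).2).2
  · calc ∑ m : Fin s.card, sigT K σ (v (eqv m)) * v (eqv m)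
        = ∑ i ∈ s, sigT K σ (v i) * v i := by
          rw [← Finset.sum_coe_sort s (fun i => sigT K σ (v i) * v i)]
          exact Fintype.sum_equiv eqv _ _ (fun m => rfl)
      _ = ∑ i, sigT K σ (v i) * v i := by
          refine Finset.sum_subset (Finset.subset_univ s) (fun x _ hx => ?_)
          have hvx : v x = 0 := by simpa [hs] using hx
          simp [hvx]
      _ = 0 := hsum

theorem one_tmul_comm (c : K) (w : A ⊗[F] K) :
    ((1 : A) ⊗ₜ c) * w = w * ((1 : A) ⊗ₜ c) := by
  induction w using TensorProduct.induction_on with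
  | zero => simp
  | tmul a d => simp [Algebra.TensorProduct.tmul_mul_tmul, mul_comm c d]
  | add w1 w2 h1 h2 => simp [mul_add, add_mul, h1, h2]

theorem one_tmul_mul_ne {c : K} (hc : c ≠ 0) {w : A ⊗[F] K} (hw : w ≠ 0) :
    ((1 : A) ⊗ₜ c) * w ≠ 0 := by
  intro h
  apply hw
  have : ((1 : A) ⊗ₜ c⁻¹) * (((1 : A) ⊗ₜ c) * w) = w := by
    rw [← mul_assoc, Algebra.TensorProduct.tmul_mul_tmul, one_mul,
      inv_mul_cancel₀ hc, ← Algebra.TensorProduct.one_def, one_mul]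
  rw [h, mul_zero] at this
  exact this.symm

end Aux

section Aux2
variable {F : Type*} [Field F] {A : Type*} [Ring A] [Algebra F A]
variable {K : Type*} [Field K] [Algebra F K] {L : Type*} [Field L] [Algebra F L]

/-- base change of the identity along an algebra map -/
noncomputable def iotaT (g : K →ₐ[F] L) : A ⊗[F] K →ₐ[F] A ⊗[F] L :=
  Algebra.TensorProduct.map (AlgHom.id F A) g

@[simp] theorem iotaT_tmul (g : K →ₐ[F] L) (a : A) (c : K) :
    (iotaT (A := A) g) (a ⊗ₜ c) = a ⊗ₜ g c := rfl

theorem iotaT_sigT (σ : A →ₗ[F] A) (g : K →ₐ[F] L) (z : A ⊗[F] K) :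
    iotaT (A := A) g (sigT K σ z) = sigT L σ (iotaT (A := A) g z) := by
  induction z using TensorProduct.induction_on with
  | zero => simp
  | tmul a c => simp
  | add z1 z2 h1 h2 => simp [h1, h2]

theorem iotaT_injective [FiniteDimensional F A] (g : K →ₐ[F] L)
    (hg : Function.Injective g) : Function.Injective (iotaT (A := A) g) := by
  have hco : ⇑(iotaT (A := A) g) = ⇑(LinearMap.lTensor A g.toLinearMap) := by
    funext z
    induction z using TensorProduct.induction_on with
    | zero => simp
    | tmul a c => simp
    | add z1 z2 h1 h2 => simp [h1, h2]
  rw [hco]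
  exact Module.Flat.lTensor_preserves_injective_linearMap g.toLinearMap hg

theorem iotaT_comp {M : Type*} [Field M] [Algebra F M]
    (g1 : K →ₐ[F] L) (g2 : L →ₐ[F] M) (z : A ⊗[F] K) :
    iotaT (A := A) g2 (iotaT (A := A) g1 z) = iotaT (A := A) (g2.comp g1) z := by
  induction z using TensorProduct.induction_on with
  | zero => simp
  | tmul a c => simp
  | add z1 z2 h1 h2 => simp [h1, h2]

/-- transfer strong anisotropy along an intertwining isomorphism with `A` itself -/
theorem strAniso_of_equiv (σ : A →ₗ[F] A)
    (hstrong : ∀ (n : ℕ), 0 < n → ∀ x : Fin n → A,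
      (∀ i, x i ≠ 0) → ∑ i, σ (x i) * x i ≠ 0)
    (ψ : (A ⊗[F] K) ≃ₐ[F] A) (hψ : ∀ z, ψ (sigT K σ z) = σ (ψ z)) :
    StrAniso K σ := by
  intro n hn z hz hsum
  refine hstrong n hn (fun m => ψ (z m)) (fun m hm => hz m ?_) ?_
  · exact (map_eq_zero_iff ψ ψ.injective).mp hm
  · calc ∑ m, σ (ψ (z m)) * ψ (z m)
        = ∑ m, ψ (sigT K σ (z m) * z m) := by
          refine Finset.sum_congr rfl (fun m _ => ?_)
          rw [map_mul, hψ]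
      _ = ψ (∑ m, sigT K σ (z m) * z m) := (map_sum ψ _ _).symm
      _ = 0 := by rw [hsum, map_zero]

theorem IsSumSq.exists_fin {R : Type*} [AddCommMonoid R] [Mul R] {x : R}
    (h : IsSumSq x) : ∃ n : ℕ, ∃ c : Fin n → R, x = ∑ j, c j * c j := by
  induction h with
  | zero => exact ⟨0, ![], by simp⟩
  | sq_add a pS ih =>
      obtain ⟨n, c, hc⟩ := ih
      refine ⟨n + 1, Fin.cons a c, ?_⟩
      rw [Fin.sum_univ_succ, hc]
      simp

theorem not_isSumSq_neg_one (σ : A →ₗ[F] A) (hσ1 : σ 1 = 1)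
    (hstr : StrAniso K σ) (hnt : (1 : A ⊗[F] K) ≠ 0) : ¬ IsSumSq (-1 : K) := by
  intro hss
  obtain ⟨s, c, hc⟩ := hss.exists_fin
  refine hstr.elim (Fin.cons 1 (fun j => (1 : A) ⊗ₜ c j) : Fin (s+1) → A ⊗[F] K)
    ?_ 0 (by simpa using hnt)
  rw [Fin.sum_univ_succ]
  simp only [Fin.cons_zero, Fin.cons_succ]
  rw [sigT_one σ hσ1, one_mul]
  have h2 : ∀ j : Fin s, sigT K σ ((1:A) ⊗ₜ c j) * ((1:A) ⊗ₜ c j)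
      = (1 : A) ⊗ₜ[F] (c j * c j) := by
    intro j
    rw [sigT_tmul, hσ1, Algebra.TensorProduct.tmul_mul_tmul, one_mul]
  rw [Finset.sum_congr rfl (fun j _ => h2 j), ← TensorProduct.tmul_sum, ← hc]
  rw [Algebra.TensorProduct.one_def, ← TensorProduct.tmul_add]
  norm_num

end Aux2

section LSU
variable {F : Type*} [Field F] {A : Type*} [Ring A] [Algebra F A]
variable {K : Type*} [Field K] [Algebra F K] {L : Type*} [Field L] [Algebra F L]

/-- the decomposition equivalence `(A ⊗ K) × (A ⊗ K) ≃ A ⊗ L` for a quadratic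
extension `L = K ⊕ K·r`. -/
noncomputable def fmE (e : (K × K) ≃ₗ[F] L) :
    ((A ⊗[F] K) × (A ⊗[F] K)) ≃ₗ[F] A ⊗[F] L :=
  (TensorProduct.prodRight F F A K K).symm ≪≫ₗ (LinearEquiv.lTensor A e)

theorem fmE_apply (g : K →ₐ[F] L) (r : L) (e : (K × K) ≃ₗ[F] L)
    (he : ∀ s t : K, e (s, t) = g s + g t * r) (y w : A ⊗[F] K) :
    fmE (A := A) e (y, w) = iotaT (A := A) g y + ((1:A) ⊗ₜ r) * iotaT (A := A) g w := by
  have h1 : ∀ y : A ⊗[F] K, fmE (A := A) e (y, 0) = iotaT (A := A) g y := by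
    intro y
    induction y using TensorProduct.induction_on with
    | zero => simp
    | tmul a s =>
      have h0 : ((0 : A ⊗[F] K)) = a ⊗ₜ (0 : K) := by simp
      rw [fmE, LinearEquiv.trans_apply, h0, TensorProduct.prodRight_symm_tmul]
      simp [he, map_zero]
    | add y1 y2 hy1 hy2 =>
      have : ((y1 + y2, (0 : A ⊗[F] K)) : _ × _) = (y1, 0) + (y2, 0) := by simp
      rw [this, map_add, hy1, hy2, map_add]
  have h2 : ∀ w : A ⊗[F] K,
      fmE (A := A) e (0, w) = ((1:A) ⊗ₜ r) * iotaT (A := A) g w := by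
    intro w
    induction w using TensorProduct.induction_on with
    | zero => simp
    | tmul a t =>
      have h0 : ((0 : A ⊗[F] K)) = a ⊗ₜ (0 : K) := by simp
      rw [fmE, LinearEquiv.trans_apply, h0, TensorProduct.prodRight_symm_tmul]
      simp only [LinearEquiv.lTensor_tmul, he, map_zero, zero_add, iotaT_tmul,
        Algebra.TensorProduct.tmul_mul_tmul, one_mul]
      rw [mul_comm r (g t)]
    | add w1 w2 hw1 hw2 =>
      have : (((0 : A ⊗[F] K), w1 + w2) : _ × _) = (0, w1) + (0, w2) := by simp
      rw [this, map_add, hw1, hw2, map_add, mul_add]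
  have : ((y, w) : _ × _) = (y, 0) + (0, w) := by simp
  rw [this, map_add, h1, h2]

theorem lsu_step [FiniteDimensional F A] (σ : A →ₗ[F] A)
    (hanti : ∀ x y : A, σ (x * y) = σ y * σ x) (hσ1 : σ 1 = 1)
    (hK : StrAniso K σ)
    (g : K →ₐ[F] L) (r : L) (x : K) (hr : r * r = g x)
    (e : (K × K) ≃ₗ[F] L) (he : ∀ s t : K, e (s, t) = g s + g t * r)
    (hx0 : x ≠ 0) {s : ℕ} (c : Fin s → K) (hx : x = ∑ j, c j * c j)
    {n : ℕ} (z : Fin n → A ⊗[F] L) (m₀ : Fin n) (hzm : z m₀ ≠ 0)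
    (hsum : ∑ m, sigT L σ (z m) * z m = 0) : False := by
  classical
  set p : Fin n → A ⊗[F] K := fun m => ((fmE (A := A) e).symm (z m)).1 with hp
  set q : Fin n → A ⊗[F] K := fun m => ((fmE (A := A) e).symm (z m)).2 with hq
  have hzdec : ∀ m, z m = iotaT (A := A) g (p m)
      + ((1:A) ⊗ₜ r) * iotaT (A := A) g (q m) := by
    intro m
    rw [hp, hq, ← fmE_apply g r e he]
    simp
  have hρc : ∀ u : A ⊗[F] L, ((1:A) ⊗ₜ r) * u = u * ((1:A) ⊗ₜ r) :=
    fun u => one_tmul_comm r u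
  have hXc : ∀ u : A ⊗[F] L, ((1:A) ⊗ₜ (g x)) * u = u * ((1:A) ⊗ₜ (g x)) :=
    fun u => one_tmul_comm (g x) u
  have hρρ : ((1:A) ⊗ₜ r) * ((1:A) ⊗ₜ r) = ((1:A) ⊗ₜ[F] (g x)) := by
    rw [Algebra.TensorProduct.tmul_mul_tmul, one_mul, hr]
  have hσρ : sigT L σ ((1:A) ⊗ₜ r) = ((1:A) ⊗ₜ r) := by rw [sigT_tmul, hσ1]
  have hιX : iotaT (A := A) g ((1:A) ⊗ₜ x) = ((1:A) ⊗ₜ[F] (g x)) := rfl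
  -- an abstract ring identity
  have hstep : ∀ SP SQ P Q : A ⊗[F] L,
      (SP + SQ * ((1:A) ⊗ₜ r)) * (P + ((1:A) ⊗ₜ r) * Q)
        = (SP * P + ((1:A) ⊗ₜ (g x)) * (SQ * Q))
          + ((1:A) ⊗ₜ r) * (SP * Q + SQ * P) := by
    intro SP SQ P Q
    have e1 : SP * (((1:A) ⊗ₜ r) * Q) = ((1:A) ⊗ₜ r) * (SP * Q) := by
      rw [← mul_assoc, ← hρc SP, mul_assoc]
    have e2 : (SQ * ((1:A) ⊗ₜ r)) * P = ((1:A) ⊗ₜ r) * (SQ * P) := by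
      rw [mul_assoc, hρc P, ← mul_assoc, ← hρc (SQ * P)]
    have e3 : (SQ * ((1:A) ⊗ₜ r)) * (((1:A) ⊗ₜ r) * Q)
        = ((1:A) ⊗ₜ (g x)) * (SQ * Q) := by
      rw [mul_assoc, ← mul_assoc ((1:A) ⊗ₜ r) _ Q, hρρ, ← mul_assoc,
        ← hXc SQ, mul_assoc]
    rw [add_mul, mul_add, mul_add, e1, e2, e3, mul_add]
    abel
  have key : ∀ m, sigT L σ (z m) * z m
      = iotaT (A := A) g (sigT K σ (p m) * p m
          + ((1:A) ⊗ₜ x) * (sigT K σ (q m) * q m))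
        + ((1:A) ⊗ₜ r) * iotaT (A := A) g
            (sigT K σ (p m) * q m + sigT K σ (q m) * p m) := by
    intro m
    rw [hzdec m, map_add, sigT_mul σ hanti, hσρ, ← iotaT_sigT, ← iotaT_sigT]
    simp only [map_add, map_mul, hιX]
    exact hstep _ _ _ _
  -- sum the expansion and project to the first component
  have hPQ : (fmE (A := A) e)
      ((∑ m, (sigT K σ (p m) * p m + ((1:A) ⊗ₜ x) * (sigT K σ (q m) * q m)),
        (∑ m, (sigT K σ (p m) * q m + sigT K σ (q m) * p m)))) = 0 := by
    rw [fmE_apply g r e he, map_sum, map_sum, Finset.mul_sum,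
      ← Finset.sum_add_distrib]
    rw [← hsum]
    exact Finset.sum_congr rfl (fun m _ => (key m).symm)
  have h0 : ((∑ m, (sigT K σ (p m) * p m + ((1:A) ⊗ₜ x) * (sigT K σ (q m) * q m)),
        (∑ m, (sigT K σ (p m) * q m + sigT K σ (q m) * p m))) :
        (A ⊗[F] K) × (A ⊗[F] K)) = 0 := by
    apply (fmE (A := A) e).injective
    rw [hPQ, map_zero]
  have hP : ∑ m, (sigT K σ (p m) * p m
      + ((1:A) ⊗ₜ x) * (sigT K σ (q m) * q m)) = 0 := by
    have := congrArg Prod.fst h0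
    simpa using this
  -- expand (1 ⊗ x) as a sum of squares
  have hxt : ((1:A) ⊗ₜ[F] x) = ∑ j, ((1:A) ⊗ₜ c j) * ((1:A) ⊗ₜ c j) := by
    rw [hx, TensorProduct.tmul_sum]
    exact Finset.sum_congr rfl (fun j _ => by
      rw [Algebra.TensorProduct.tmul_mul_tmul, one_mul])
  set v : (Fin n ⊕ Fin n × Fin s) → A ⊗[F] K :=
    Sum.elim p (fun mj => ((1:A) ⊗ₜ c mj.2) * q mj.1) with hv
  have swap : ∀ (d : K) (u w : A ⊗[F] K),
      u * (((1:A) ⊗ₜ d) * w) = ((1:A) ⊗ₜ d) * (u * w) := by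
    intro d u w
    rw [← mul_assoc, ← one_tmul_comm d u, mul_assoc]
  have hterm : ∀ m j, sigT K σ (((1:A) ⊗ₜ c j) * q m) * (((1:A) ⊗ₜ c j) * q m)
      = ((1:A) ⊗ₜ c j) * (((1:A) ⊗ₜ c j) * (sigT K σ (q m) * q m)) := by
    intro m j
    rw [sigT_mul σ hanti, sigT_tmul, hσ1]
    rw [mul_assoc (sigT K σ (q m)) _ _, swap, swap]
  have hvsum : ∑ i, sigT K σ (v i) * v i = 0 := by
    rw [Fintype.sum_sum_type]
    have hA : ∑ m, sigT K σ (v (Sum.inl m)) * v (Sum.inl m)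
        = ∑ m, sigT K σ (p m) * p m := rfl
    have hB : ∑ mj : Fin n × Fin s, sigT K σ (v (Sum.inr mj)) * v (Sum.inr mj)
        = ∑ m, ((1:A) ⊗ₜ x) * (sigT K σ (q m) * q m) := by
      rw [Fintype.sum_prod_type]
      refine Finset.sum_congr rfl (fun m _ => ?_)
      have : ∀ j : Fin s, sigT K σ (v (Sum.inr (m, j))) * v (Sum.inr (m, j))
          = ((1:A) ⊗ₜ c j) * (((1:A) ⊗ₜ c j) * (sigT K σ (q m) * q m)) := by
        intro j
        rw [hv]
        exact hterm m j
      rw [Finset.sum_congr rfl (fun j _ => this j), hxt, Finset.sum_mul]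
      exact Finset.sum_congr rfl (fun j _ => by rw [mul_assoc])
    rw [hA, hB, ← Finset.sum_add_distrib]
    exact hP
  -- find a nonzero entry
  have hz' : fmE (A := A) e (p m₀, q m₀) = z m₀ := by
    rw [hp, hq]
    simp
  have hpq0 : ¬ (p m₀ = 0 ∧ q m₀ = 0) := by
    rintro ⟨h1, h2⟩
    apply hzm
    rw [← hz', h1, h2]
    have h00 : ((0, 0) : (A ⊗[F] K) × (A ⊗[F] K)) = 0 := rfl
    rw [h00, map_zero]
  by_cases hp0 : p m₀ = 0
  · have hq0 : q m₀ ≠ 0 := fun h => hpq0 ⟨hp0, h⟩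
    have hcj : ∃ j, c j ≠ 0 := by
      by_contra hall
      push_neg at hall
      apply hx0
      rw [hx]
      exact Finset.sum_eq_zero (fun j _ => by rw [hall j, mul_zero])
    obtain ⟨j, hj⟩ := hcj
    refine hK.elim v hvsum (Sum.inr (m₀, j)) ?_
    rw [hv]
    exact one_tmul_mul_ne hj hq0
  · exact hK.elim v hvsum (Sum.inl m₀) hp0

end LSU

section Chain
variable {F : Type*} [Field F] {A : Type*} [Ring A] [Algebra F A]
variable {E : Type*} [Field E] [Algebra F E]

theorem inclusion_comp_eq {K1 K2 K3 : IntermediateField F E}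
    (h1 : K1 ≤ K2) (h2 : K2 ≤ K3) (w : A ⊗[F] ↥K1) :
    iotaT (A := A) (IntermediateField.inclusion h2)
        (iotaT (A := A) (IntermediateField.inclusion h1) w)
      = iotaT (A := A) (IntermediateField.inclusion (h1.trans h2)) w := by
  rw [iotaT_comp]
  congr 1

theorem strAniso_sSup [FiniteDimensional F A] (σ : A →ₗ[F] A)
    (c : Set (IntermediateField F E)) (hchain : IsChain (· ≤ ·) c)
    (hne : c.Nonempty) (hall : ∀ K' ∈ c, StrAniso ↥K' σ) :
    StrAniso ↥(sSup c) σ := by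
  classical
  haveI : Nonempty ↥c := hne.to_subtype
  have hmem : ∀ k, k ∈ sSup c → ∃ K' ∈ c, k ∈ K' := by
    intro k hk
    rw [sSup_eq_iSup'] at hk
    rw [← SetLike.mem_coe, IntermediateField.coe_iSup_of_directed
      hchain.directedOn.directed_val, Set.mem_iUnion] at hk
    obtain ⟨K', hK'⟩ := hk
    exact ⟨K', K'.2, hK'⟩
  -- every element of the base change pulls back to some member of the chain
  have hpull : ∀ z : A ⊗[F] ↥(sSup c), ∃ K', ∃ (h : K' ∈ c),
      ∃ w : A ⊗[F] ↥K',
        iotaT (A := A) (IntermediateField.inclusion (le_sSup h)) w = z := by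
    intro z
    induction z using TensorProduct.induction_on with
    | zero =>
      obtain ⟨K0, hK0⟩ := hne
      exact ⟨K0, hK0, 0, map_zero _⟩
    | tmul a k =>
      obtain ⟨K', hK', hkK'⟩ := hmem ↑k k.2
      refine ⟨K', hK', a ⊗ₜ ⟨↑k, hkK'⟩, ?_⟩
      rw [iotaT_tmul]
      exact congrArg (a ⊗ₜ[F] ·) (Subtype.ext rfl)
    | add z1 z2 h1 h2 =>
      obtain ⟨K1, hK1, w1, hw1⟩ := h1
      obtain ⟨K2, hK2, w2, hw2⟩ := h2
      rcases hchain.total hK1 hK2 with h12 | h21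
      · refine ⟨K2, hK2,
          iotaT (A := A) (IntermediateField.inclusion h12) w1 + w2, ?_⟩
        rw [map_add, hw2, inclusion_comp_eq h12 (le_sSup hK2), hw1]
      · refine ⟨K1, hK1,
          w1 + iotaT (A := A) (IntermediateField.inclusion h21) w2, ?_⟩
        rw [map_add, hw1, inclusion_comp_eq h21 (le_sSup hK1), hw2]
  intro n hn z hz hsum
  choose Kf hKf w hw using (fun m => hpull (z m))
  -- common upper bound for the finitely many members
  haveI : IsDirected ↥c (· ≤ ·) := by
    refine ⟨fun a b => ?_⟩
    obtain ⟨u, hu, h1, h2⟩ := hchain.directedOn a a.2 b b.2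
    exact ⟨⟨u, hu⟩, h1, h2⟩
  obtain ⟨M, hM⟩ :=
    Finset.exists_le (Finset.univ.image (fun m => (⟨Kf m, hKf m⟩ : ↥c)))
  have hle : ∀ m, Kf m ≤ ↑M := by
    intro m
    exact hM _ (Finset.mem_image_of_mem _ (Finset.mem_univ m))
  set u : Fin n → A ⊗[F] ↥(M : IntermediateField F E) :=
    fun m => iotaT (A := A) (IntermediateField.inclusion (hle m)) (w m) with hu
  have hzu : ∀ m, iotaT (A := A)
      (IntermediateField.inclusion (le_sSup M.2)) (u m) = z m := by
    intro m
    rw [hu, inclusion_comp_eq (hle m) (le_sSup M.2), ← hw m]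
  have hu0 : ∀ m, u m ≠ 0 := by
    intro m h0
    apply hz m
    rw [← hzu m, h0, map_zero]
  have husum : ∑ m, sigT ↥(M : IntermediateField F E) σ (u m) * u m = 0 := by
    have hinj := iotaT_injective (A := A)
      (IntermediateField.inclusion (le_sSup M.2))
      (IntermediateField.inclusion_injective _)
    apply hinj
    rw [map_zero, map_sum]
    rw [← hsum]
    refine Finset.sum_congr rfl (fun m _ => ?_)
    rw [map_mul, iotaT_sigT, hzu m]
  exact hall _ M.2 n hn u hu0 husum

end Chain

section Bot
variable {F : Type*} [Field F] {A : Type*} [Ring A] [Algebra F A]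
variable (E : Type*) [Field E] [Algebra F E]

noncomputable def psiBot : (A ⊗[F] ↥(⊥ : IntermediateField F E)) ≃ₐ[F] A :=
  (Algebra.TensorProduct.congr (AlgEquiv.refl (R := F) (A₁ := A))
    (IntermediateField.botEquiv F E)).trans (Algebra.TensorProduct.rid F F A)

theorem psiBot_sigT (σ : A →ₗ[F] A) (z : A ⊗[F] ↥(⊥ : IntermediateField F E)) :
    psiBot E (sigT _ σ z) = σ (psiBot E z) := by
  induction z using TensorProduct.induction_on with
  | zero => simp
  | tmul a k =>
      simp only [sigT_tmul, psiBot, AlgEquiv.trans_apply,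
        Algebra.TensorProduct.congr_apply, AlgEquiv.toAlgHom_eq_coe,
        Algebra.TensorProduct.map_tmul, AlgHom.coe_coe, AlgEquiv.coe_refl, id_eq,
        Algebra.TensorProduct.rid_tmul]
      exact (map_smul σ _ _).symm
  | add z1 z2 h1 h2 => simp [h1, h2]

theorem one_ne_zero_tensor [Nontrivial A] [FiniteDimensional F A]
    {K : IntermediateField F E} :
    (1 : A ⊗[F] ↥K) ≠ 0 := by
  intro h1
  have hinj := iotaT_injective (A := A)
    (IntermediateField.inclusion (bot_le : ⊥ ≤ K))
    (IntermediateField.inclusion_injective _)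
  have h2 : (1 : A ⊗[F] ↥(⊥ : IntermediateField F E)) = 0 := by
    apply hinj
    rw [map_one, map_zero, h1]
  have h3 := congrArg (psiBot (A := A) E) h2
  rw [map_one, map_zero] at h3
  exact one_ne_zero h3

end Bot

section Quad
variable {F : Type*} [Field F] {E : Type*} [Field E] [Algebra F E]

theorem quad_ext (K : IntermediateField F E) (x : ↥K) (hsq : ¬ IsSquare x)
    (r : E) (hr : r * r = (x : E)) :
    ∃ L : IntermediateField F E, ∃ hle : K ≤ L, ∃ rL : ↥L,
      ∃ e : (↥K × ↥K) ≃ₗ[F] ↥L,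
      K < L ∧ rL * rL = IntermediateField.inclusion hle x ∧
      (∀ s t : ↥K, e (s, t) = IntermediateField.inclusion hle s
         + IntermediateField.inclusion hle t * rL) := by
  classical
  set g0 : ↥K × ↥K →ₗ[F] E :=
    K.val.toLinearMap ∘ₗ LinearMap.fst F ↥K ↥K
      + (LinearMap.mulRight F r) ∘ₗ K.val.toLinearMap ∘ₗ LinearMap.snd F ↥K ↥K
    with hg0def
  have hg0 : ∀ st : ↥K × ↥K, g0 st = (st.1 : E) + (st.2 : E) * r := fun st => rfl
  set p : Submodule F E := LinearMap.range g0 with hpdef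
  have h1p : (1 : E) ∈ p := ⟨(1, 0), by simp [hg0]⟩
  have hmulp : ∀ a b : E, a ∈ p → b ∈ p → a * b ∈ p := by
    rintro a b ⟨⟨s, t⟩, rfl⟩ ⟨⟨s', t'⟩, rfl⟩
    refine ⟨(s * s' + t * t' * x, s * t' + t * s'), ?_⟩
    rw [hg0, hg0, hg0]
    push_cast
    first
    | linear_combination (-(t : E) * (t' : E)) * hr
    | linear_combination ((t : E) * (t' : E)) * hr
  -- nonvanishing of the "norm"
  have hnorm : ∀ s t : ↥K, ((s : E) + (t : E) * r ≠ 0) →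
      s * s - t * t * x ≠ 0 := by
    intro s t hy0 hd0
    have hss : s * s = t * t * x := by linear_combination hd0
    by_cases ht : t = 0
    · have hs : s = 0 := by
        have : s * s = 0 := by rw [hss, ht]; ring
        exact mul_self_eq_zero.mp this
      apply hy0
      rw [hs, ht]
      push_cast
      ring
    · apply hsq
      refine ⟨s * t⁻¹, ?_⟩
      field_simp
      first
      | linear_combination -hss
      | linear_combination hss
  have hinvp : ∀ a : E, a ∈ p → a⁻¹ ∈ p := by
    rintro a ⟨⟨s, t⟩, rfl⟩
    by_cases hy0 : g0 (s, t) = 0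
    · rw [hy0, inv_zero]
      exact p.zero_mem
    · rw [hg0] at hy0 ⊢
      set d : ↥K := s * s - t * t * x with hd
      have hd0 : d ≠ 0 := hnorm s t hy0
      have hdE : (d : E) ≠ 0 := fun h =>
        hd0 (Subtype.ext (by simpa using h))
      have hdd : (d : E) * (d : E)⁻¹ = 1 := mul_inv_cancel₀ hdE
      have hdE2 : (d : E) = (s : E) * (s : E) - (t : E) * (t : E) * (x : E) := by
        rw [hd]; push_cast; ring
      have hinv : ((s : E) + (t : E) * r)
          * ((((s * d⁻¹ : ↥K)) : E) + (((-(t * d⁻¹) : ↥K)) : E) * r) = 1 := by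
        push_cast
        first
        | linear_combination (-(t:E) * (t:E) * ((d:E))⁻¹) * hr - ((d:E))⁻¹ * hdE2 + hdd
        | linear_combination ((t:E) * (t:E) * ((d:E))⁻¹) * hr - ((d:E))⁻¹ * hdE2 + hdd
        | linear_combination (-(t:E) * (t:E) * ((d:E))⁻¹) * hr + ((d:E))⁻¹ * hdE2 + hdd
      rw [inv_eq_of_mul_eq_one_right hinv]
      exact ⟨(s * d⁻¹, -(t * d⁻¹)), by rw [hg0]⟩
  set SubA : Subalgebra F E := p.toSubalgebra h1p (fun a b ha hb => hmulp a b ha hb)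
    with hSubA
  set L : IntermediateField F E := SubA.toIntermediateField
    (fun a ha => hinvp a ha) with hL
  have hmemL : ∀ y : E, y ∈ L ↔ y ∈ p := fun y => Iff.rfl
  have hle : K ≤ L := by
    intro k hk
    rw [hmemL]
    exact ⟨(⟨k, hk⟩, 0), by rw [hg0]; push_cast; ring⟩
  have hrL : r ∈ L := by
    rw [hmemL]
    exact ⟨(0, 1), by rw [hg0]; push_cast; ring⟩
  have hrK : r ∉ K := by
    intro h
    exact hsq ⟨⟨r, h⟩, Subtype.ext hr.symm⟩
  have hlt : K < L := lt_of_le_of_ne hle (fun heq => hrK (heq ▸ hrL))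
  set e0 : ↥K × ↥K →ₗ[F] ↥L :=
    { toFun := fun st => ⟨g0 st, (hmemL _).mpr ⟨st, rfl⟩⟩
      map_add' := fun a b => Subtype.ext (g0.map_add a b)
      map_smul' := fun m a => Subtype.ext (g0.map_smul m a) } with he0
  have hinj : Function.Injective e0 := by
    intro a b hab
    have hval : g0 a = g0 b := congrArg Subtype.val hab
    have hsub : g0 (a - b) = 0 := by rw [map_sub, hval, sub_self]
    rw [hg0] at hsub
    set s := (a - b).1 with hs
    set t := (a - b).2 with ht
    have ht0 : t = 0 := by
      by_contra ht0
      apply hrK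
      have htE : (t : E) ≠ 0 := fun h => ht0 (Subtype.ext (by simpa using h))
      have h1 : (t : E) * r = -(s : E) := by linear_combination hsub
      have h2 : r = ((t : E))⁻¹ * ((t : E) * r) := by
        rw [← mul_assoc, inv_mul_cancel₀ htE, one_mul]
      rw [h2, h1]
      exact K.mul_mem (K.inv_mem t.2) (K.neg_mem s.2)
    have hs0 : s = 0 := by
      rw [ht0] at hsub
      push_cast at hsub
      have : (s : E) = 0 := by linear_combination hsub
      exact Subtype.ext (by simpa using this)
    have : a - b = 0 := Prod.ext hs0 ht0
    exact sub_eq_zero.mp this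
  have hsurj : Function.Surjective e0 := by
    intro y
    obtain ⟨st, hst⟩ := (hmemL _).mp y.2
    exact ⟨st, Subtype.ext hst⟩
  refine ⟨L, hle, ⟨r, hrL⟩, LinearEquiv.ofBijective e0 ⟨hinj, hsurj⟩,
    hlt, Subtype.ext hr, fun s t => Subtype.ext ?_⟩
  show g0 (s, t) = _
  rw [hg0]
  rfl

end Quad

/-- Let `(A, σ)` be a central simple algebra with an (orthogonal) involution of the first
kind over a formally real field `F`, and suppose `σ` is strongly anisotropic.  Then there
is an algebraic extension `K` of `F` (inside an algebraic closure) that is formally real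
and Pythagorean, such that `σ_K` is strongly anisotropic while `σ_L` is weakly isotropic
for every strictly larger algebraic extension `L` of `K`. -/
theorem exists_maximal_pythagorean_strongly_anisotropic
    (F : Type*) [Field F] (A : Type*) [Ring A] [Algebra F A]
    [Algebra.IsCentral F A] [IsSimpleRing A] [FiniteDimensional F A]
    (σ : A →ₗ[F] A)
    (hanti : ∀ x y : A, σ (x * y) = σ y * σ x)
    (hinv : ∀ x : A, σ (σ x) = x)
    (hFR : ¬ IsSumSq (-1 : F))
    (hstrong : ∀ (n : ℕ), 0 < n → ∀ x : Fin n → A,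
      (∀ i, x i ≠ 0) → ∑ i, σ (x i) * x i ≠ 0) :
    ∃ K : IntermediateField F (AlgebraicClosure F),
      -- `K` is formally real
      (¬ IsSumSq (-1 : ↥K)) ∧
      -- `K` is Pythagorean
      (∀ x : ↥K, IsSumSq x → IsSquare x) ∧
      -- `σ_K` is strongly anisotropic
      (∀ (n : ℕ), 0 < n → ∀ z : Fin n → A ⊗[F] ↥K,
        (∀ m, z m ≠ 0) →
          ∑ m, (TensorProduct.map σ (LinearMap.id : ↥K →ₗ[F] ↥K)) (z m) * z m ≠ 0) ∧
      -- over any strictly larger algebraic extension `L` of `K`, `σ_L` is weakly isotropic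
      (∀ L : IntermediateField F (AlgebraicClosure F), K < L →
        ∃ (n : ℕ), 0 < n ∧ ∃ z : Fin n → A ⊗[F] ↥L,
          (∀ m, z m ≠ 0) ∧
            ∑ m, (TensorProduct.map σ (LinearMap.id : ↥L →ₗ[F] ↥L)) (z m) * z m = 0) := by
  classical
  have hσ1 : σ 1 = 1 := sig_one σ hanti hinv
  set S : Set (IntermediateField F (AlgebraicClosure F)) :=
    {K | StrAniso ↥K σ} with hS
  have hbot : (⊥ : IntermediateField F (AlgebraicClosure F)) ∈ S :=
    strAniso_of_equiv σ hstrong (psiBot (A := A) (AlgebraicClosure F))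
      (psiBot_sigT (AlgebraicClosure F) σ)
  have hub : ∀ c ⊆ S, IsChain (· ≤ ·) c → ∀ y ∈ c, ∃ ub ∈ S, ∀ z ∈ c, z ≤ ub := by
    intro c hcS hchain y hy
    exact ⟨sSup c, strAniso_sSup σ c hchain ⟨y, hy⟩ (fun K' hK' => hcS hK'),
      fun z hz => le_sSup hz⟩
  obtain ⟨K, -, hKmax⟩ := zorn_le_nonempty₀ S hub ⊥ hbot
  have hKS : StrAniso ↥K σ := hKmax.prop
  have hnt1 : (1 : A ⊗[F] ↥K) ≠ 0 := one_ne_zero_tensor (A := A) (AlgebraicClosure F)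
  have hnotL : ∀ L : IntermediateField F (AlgebraicClosure F), K < L →
      ¬ StrAniso ↥L σ := by
    intro L hlt hSL
    exact absurd (hKmax.2 hSL hlt.le) hlt.not_ge
  refine ⟨K, ?_, ?_, ?_, ?_⟩
  · exact not_isSumSq_neg_one σ hσ1 hKS hnt1
  · -- Pythagorean
    intro x hx
    by_contra hsq
    obtain ⟨r, hr⟩ := IsAlgClosed.exists_pow_nat_eq
      ((x : AlgebraicClosure F)) (n := 2) two_pos
    have hr' : r * r = (x : AlgebraicClosure F) := by rw [← hr]; ring
    obtain ⟨L, hle, rL, e, hlt, hrr, he⟩ := quad_ext K x hsq r hr'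
    have hLn : ¬ (∀ (n : ℕ), 0 < n → ∀ z : Fin n → A ⊗[F] ↥L,
        (∀ m, z m ≠ 0) → ∑ m, sigT ↥L σ (z m) * z m ≠ 0) := hnotL L hlt
    push_neg at hLn
    obtain ⟨n, hn, z, hz, hsum⟩ := hLn
    have hx0 : x ≠ 0 := fun h => hsq (h ▸ ⟨0, by ring⟩)
    obtain ⟨s, c, hc⟩ := hx.exists_fin
    exact lsu_step σ hanti hσ1 hKS (IntermediateField.inclusion hle) rL x
      hrr e he hx0 c hc z ⟨0, hn⟩ (hz _) hsum
  · -- strong anisotropy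
    exact fun n hn z hz => hKS n hn z hz
  · -- weak isotropy over larger fields
    intro L hlt
    have hLn : ¬ (∀ (n : ℕ), 0 < n → ∀ z : Fin n → A ⊗[F] ↥L,
        (∀ m, z m ≠ 0) → ∑ m, sigT ↥L σ (z m) * z m ≠ 0) := hnotL L hlt
    push_neg at hLn
    obtain ⟨n, hn, z, hz, hsum⟩ := hLn
    exact ⟨n, hn, z, hz, hsum⟩
end

section
/- Let F be a formally real Pythagorean field and Q = (t,t) the quaternion division algebra over F((t)) with orthogonal involution σ = Int(i) ∘ γ. Then the element 2j, which is a sum of hermitian squares in (Q, σ), is not itself a hermitian square: there is no x ∈ Q with x·σ(x) = 2j. -/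
open Quaternion

/-- the variable `t` of `F((t))` -/
noncomputable def lsT (F : Type*) [Field F] : LaurentSeries F := HahnSeries.single 1 1

/-- `i` in the quaternion algebra `Q = (t,t)` over `F((t))` -/
noncomputable def qI (F : Type*) [Field F] : ℍ[LaurentSeries F, lsT F, lsT F] := ⟨0, 1, 0, 0⟩

/-- `j` in the quaternion algebra `Q = (t,t)` over `F((t))` -/
noncomputable def qJ (F : Type*) [Field F] : ℍ[LaurentSeries F, lsT F, lsT F] := ⟨0, 0, 1, 0⟩

/-- `k = ij` in the quaternion algebra `Q = (t,t)` over `F((t))` -/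
noncomputable def qK (F : Type*) [Field F] : ℍ[LaurentSeries F, lsT F, lsT F] := ⟨0, 0, 0, 1⟩

/-- The orthogonal involution `σ = Int(i) ∘ γ` on `Q = (t,t)` over `F((t))`:
since `i⁻¹ = t⁻¹·i`, we have `σ(x) = t⁻¹ • (i · γ(x) · i)`, where `γ = star`. -/
noncomputable def qSigma (F : Type*) [Field F] (x : ℍ[LaurentSeries F, lsT F, lsT F]) :
    ℍ[LaurentSeries F, lsT F, lsT F] := (lsT F)⁻¹ • (qI F * star x * qI F)

/-- the reduced norm on `Q` -/
noncomputable def nrd (F : Type*) [Field F] (x : ℍ[LaurentSeries F, lsT F, lsT F]) :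
    LaurentSeries F :=
  x.re^2 - lsT F * x.imI^2 - lsT F * x.imJ^2 + lsT F * lsT F * x.imK^2

lemma lsT_ne_zero (F : Type*) [Field F] : lsT F ≠ 0 :=
  HahnSeries.single_ne_zero one_ne_zero

lemma nrd_mul (F : Type*) [Field F] (x y : ℍ[LaurentSeries F, lsT F, lsT F]) :
    nrd F (x * y) = nrd F x * nrd F y := by
  simp only [nrd, QuaternionAlgebra.re_mul, QuaternionAlgebra.imI_mul,
    QuaternionAlgebra.imJ_mul, QuaternionAlgebra.imK_mul]
  ring

lemma nrd_star (F : Type*) [Field F] (x : ℍ[LaurentSeries F, lsT F, lsT F]) :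
    nrd F (star x) = nrd F x := by
  simp only [nrd, QuaternionAlgebra.re_star, QuaternionAlgebra.imI_star,
    QuaternionAlgebra.imJ_star, QuaternionAlgebra.imK_star]
  ring

lemma nrd_smul (F : Type*) [Field F] (c : LaurentSeries F)
    (x : ℍ[LaurentSeries F, lsT F, lsT F]) :
    nrd F (c • x) = c^2 * nrd F x := by
  simp only [nrd, QuaternionAlgebra.re_smul, QuaternionAlgebra.imI_smul,
    QuaternionAlgebra.imJ_smul, QuaternionAlgebra.imK_smul, smul_eq_mul]
  ring

lemma nrd_qI (F : Type*) [Field F] : nrd F (qI F) = -(lsT F) := by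
  simp [nrd, qI]

lemma nrd_sigma (F : Type*) [Field F] (x : ℍ[LaurentSeries F, lsT F, lsT F]) :
    nrd F (qSigma F x) = nrd F x := by
  rw [qSigma, nrd_smul, nrd_mul, nrd_mul, nrd_star, nrd_qI]
  have ht := lsT_ne_zero F
  field_simp

lemma nrd_two_qJ (F : Type*) [Field F] :
    nrd F (2 * qJ F) = -(4 * lsT F) := by
  have h : 2 * qJ F = (⟨0, 0, 2, 0⟩ : ℍ[LaurentSeries F, lsT F, lsT F]) := by
    rw [two_mul]
    apply QuaternionAlgebra.ext <;> simp [qJ] <;> norm_num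
  rw [h]
  simp [nrd]
  ring

/-- For a formally real Pythagorean field `F` and the quaternion division algebra
`Q = (t,t)` over `F((t))` with orthogonal involution `σ = Int(i) ∘ γ`, the element `2j`
(a sum of hermitian squares) is not itself a hermitian square: no `x ∈ Q` satisfies
`x·σ(x) = 2j`. -/
theorem two_j_not_a_hermitian_square (F : Type*) [Field F]
    (hFR : ¬ IsSumSq (-1 : F)) (hPy : ∀ x : F, IsSumSq x → IsSquare x) :
    ¬ ∃ x : ℍ[LaurentSeries F, lsT F, lsT F], x * qSigma F x = 2 * qJ F := by
  rintro ⟨x, hx⟩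
  have hn := congrArg (nrd F) hx
  rw [nrd_mul, nrd_sigma, nrd_two_qJ] at hn
  -- char F ≠ 2
  have h2F : (2 : F) ≠ 0 := by
    intro h
    apply hFR
    have h1 : (-1 : F) = 1 * 1 + 0 := by
      have : (1 : F) + 1 = 0 := by rw [← h]; norm_num
      linear_combination -this
    rw [h1]
    exact IsSumSq.sq_add 1 IsSumSq.zero
  have h4F : (4 : F) ≠ 0 := by
    have : (4 : F) = 2 * 2 := by norm_num
    rw [this]; exact mul_ne_zero h2F h2F
  -- rewrite RHS as a single
  have hrhs : -(4 * lsT F) = -(HahnSeries.single (1 : ℤ) (4 : F)) := by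
    congr 1
    have h4 : (4 : LaurentSeries F) = HahnSeries.single (0 : ℤ) (4 : F) := by
      rw [← HahnSeries.C_apply]
      exact (map_ofNat (HahnSeries.C : F →+* LaurentSeries F) 4).symm
    rw [lsT, h4, HahnSeries.single_mul_single, zero_add, mul_one]
  rw [hrhs] at hn
  have hsne : (HahnSeries.single (1 : ℤ) (4 : F)) ≠ 0 := HahnSeries.single_ne_zero h4F
  have hne : nrd F x ≠ 0 := by
    intro h0
    rw [h0, mul_zero] at hn
    exact (neg_ne_zero.mpr hsne) hn.symm
  have ho := congrArg HahnSeries.order hn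
  rw [HahnSeries.order_mul hne hne, HahnSeries.order_neg, HahnSeries.order_single h4F] at ho
  omega
end

section
/- Every quadratic form over ℚ that becomes isotropic over ℝ is weakly isotropic over ℚ. -/
/-- Every (diagonal, nondegenerate) quadratic form over `ℚ` that becomes isotropic over
`ℝ` is weakly isotropic over `ℚ`: some multiple `m × q` of the form is isotropic. -/
theorem rat_real_totally_positive
    (n : ℕ) (a : Fin n → ℚ) (ha : ∀ i, a i ≠ 0)
    (hiso : ∃ x : Fin n → ℝ, (∃ i, x i ≠ 0) ∧ ∑ i, (a i : ℝ) * x i ^ 2 = 0) :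
    ∃ (m : ℕ), 0 < m ∧ ∃ y : Fin m → Fin n → ℚ,
      (∃ p i, y p i ≠ 0) ∧ ∑ p, ∑ i, a i * y p i ^ 2 = 0 := by
  obtain ⟨x, ⟨i0, hx0⟩, hsum⟩ := hiso
  -- the form is indefinite
  have hij : ∃ i j, 0 < a i ∧ a j < 0 := by
    by_contra h
    push_neg at h
    by_cases hpos : ∀ k, 0 < a k
    · have hlt : 0 < ∑ k, (a k : ℝ) * x k ^ 2 := by
        apply Finset.sum_pos'
        · intro k _
          have hk : (0:ℝ) ≤ (a k : ℝ) := by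
            have := hpos k; positivity
          positivity
        · exact ⟨i0, Finset.mem_univ _, by
            have h1 : (0:ℝ) < (a i0 : ℝ) := by exact_mod_cast hpos i0
            have h2 : (0:ℝ) < x i0 ^ 2 := pow_two_pos_of_ne_zero hx0
            exact mul_pos h1 h2⟩
      linarith [hsum]
    · push_neg at hpos
      obtain ⟨k, hk⟩ := hpos
      have hk' : a k < 0 := lt_of_le_of_ne hk (ha k)
      have hall : ∀ t, a t < 0 := by
        intro t
        rcases lt_or_gt_of_ne (ha t) with h' | h'
        · exact h'
        · exact absurd hk' (not_lt.mpr (h t k h'))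
      have hlt : ∑ k, (a k : ℝ) * x k ^ 2 < 0 := by
        apply Finset.sum_neg'
        · intro t _
          have : (a t : ℝ) < 0 := by exact_mod_cast hall t
          nlinarith [sq_nonneg (x t)]
        · exact ⟨i0, Finset.mem_univ _, by
            have h1 : (a i0 : ℝ) < 0 := by exact_mod_cast hall i0
            nlinarith [pow_two_pos_of_ne_zero hx0]⟩
      linarith [hsum]
  obtain ⟨i, j, hai, haj⟩ := hij
  set r : ℚ := a i / (-(a j)) with hr
  have hr0 : 0 < r := div_pos hai (neg_pos.2 haj)
  set N1 : ℕ := r.den with hN1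
  set N2 : ℕ := r.num.toNat with hN2
  have hnum : (N2 : ℚ) = (N1 : ℚ) * r := by
    have h1 : (0:ℤ) ≤ r.num := le_of_lt (Rat.num_pos.mpr hr0)
    have h2 : (N2 : ℤ) = r.num := Int.toNat_of_nonneg h1
    have h3 : (N1 : ℚ) * r = (r.num : ℚ) := by
      rw [hN1, mul_comm, Rat.mul_den_eq_num]
    rw [h3]
    exact_mod_cast h2
  have hN1pos : 0 < N1 := r.pos
  refine ⟨N1 + N2, by omega, fun p k => if (p : ℕ) < N1 then (if k = i then 1 else 0)
    else (if k = j then 1 else 0), ⟨⟨0, by omega⟩, i, by simp [hN1pos]⟩, ?_⟩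
  have hinner : ∀ t : Fin n, ∑ k, a k * (if k = t then (1:ℚ) else 0) ^ 2 = a t := by
    intro t
    rw [Finset.sum_eq_single t]
    · simp
    · intro b _ hb
      simp [hb]
    · simp
  rw [Fin.sum_univ_add]
  have h1 : ∀ p : Fin N1, (((Fin.castAdd N2 p : Fin (N1 + N2)) : ℕ) < N1) := fun p => p.2
  have h2 : ∀ p : Fin N2, ¬(((Fin.natAdd N1 p : Fin (N1 + N2)) : ℕ) < N1) := fun p => by
    simp [Fin.natAdd]
  simp only [h1, h2, if_true, if_pos, if_neg, not_false_iff]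
  have e1 : ∀ p : Fin N1, (if ((Fin.castAdd N2 p : Fin (N1 + N2)) : ℕ) < N1 then True else False) = True := by
    intro p; simp [h1 p]
  calc (∑ _p : Fin N1, ∑ k, a k * (if k = i then (1:ℚ) else 0) ^ 2)
        + ∑ _p : Fin N2, ∑ k, a k * (if k = j then (1:ℚ) else 0) ^ 2
      = (N1 : ℚ) * a i + (N2 : ℚ) * a j := by
        simp [hinner, Finset.sum_const, nsmul_eq_mul]
    _ = 0 := by
        have haj' : a j ≠ 0 := ne_of_lt haj
        rw [hnum, hr]
        rw [div_neg]
        field_simp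
        ring
end

section
/- Every quadratic form over ℚ((t)) that becomes isotropic over ℝ((t)) is weakly isotropic over ℚ((t)). (I.e., the extension ℝ((t))/ℚ((t)) is totally positive.) -/
noncomputable def sqAux (c : ℕ → ℚ) : ℕ → ℚ
  | 0 => 1
  | (n+1) => (c (n+1) - ∑ i ∈ (Finset.range n).attach,
      sqAux c (i.1+1) * sqAux c (n - i.1)) / 2
  decreasing_by
  · have := i.2; rw [Finset.mem_range] at this; omega
  · have := i.2; rw [Finset.mem_range] at this; omega

lemma sqAux_spec (c : ℕ → ℚ) (hc : c 0 = 1) (n : ℕ) :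
    ∑ k ∈ Finset.range (n+1), sqAux c k * sqAux c (n - k) = c n := by
  cases n with
  | zero => simp [sqAux, hc]
  | succ n =>
    have h0 : sqAux c 0 = 1 := by simp [sqAux]
    have hdef : sqAux c (n+1) = (c (n+1) - ∑ i ∈ (Finset.range n).attach,
        sqAux c (i.1+1) * sqAux c (n - i.1)) / 2 := by rw [sqAux]
    have h1 : ∑ i ∈ Finset.range n, sqAux c (i+1) * sqAux c (n + 1 - (i+1))
        = ∑ i ∈ (Finset.range n).attach, sqAux c (i.1+1) * sqAux c (n - i.1) := by
      rw [← Finset.sum_attach (Finset.range n) (fun i => sqAux c (i+1) * sqAux c (n + 1 - (i+1)))]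
      exact Finset.sum_congr rfl fun i _ => by rw [Nat.succ_sub_succ]
    rw [Finset.sum_range_succ, Finset.sum_range_succ', h1]
    simp only [h0, one_mul, Nat.sub_self, Nat.sub_zero, mul_one]
    rw [hdef]; ring

lemma exists_sq_powerSeries (f : PowerSeries ℚ) (hf : PowerSeries.constantCoeff f = 1) :
    ∃ s : PowerSeries ℚ, s * s = f := by
  refine ⟨PowerSeries.mk (sqAux (fun n => PowerSeries.coeff n f)), ?_⟩
  ext n
  rw [PowerSeries.coeff_mul, Finset.Nat.sum_antidiagonal_eq_sum_range_succ_mk]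
  simpa [PowerSeries.coeff_mk] using
    sqAux_spec (fun n => PowerSeries.coeff n f) (by simpa using hf) n

/-- The coefficientwise inclusion `ℚ((t)) → ℝ((t))` of Laurent series fields. -/
noncomputable def laurentIncl (x : LaurentSeries ℚ) : LaurentSeries ℝ :=
  x.map (algebraMap ℚ ℝ)

lemma laurentIncl_coeff (x : LaurentSeries ℚ) (g : ℤ) :
    (laurentIncl x).coeff g = algebraMap ℚ ℝ (x.coeff g) := rfl

lemma laurentIncl_ne_zero {x : LaurentSeries ℚ} (hx : x ≠ 0) : laurentIncl x ≠ 0 := by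
  intro h
  apply (HahnSeries.coeff_order_eq_zero.not.2 hx)
  have := congrArg (fun y : LaurentSeries ℝ => y.coeff x.order) h
  simp only [laurentIncl_coeff, HahnSeries.coeff_zero] at this
  exact (algebraMap ℚ ℝ).injective (by simpa using this)

lemma laurentIncl_order {x : LaurentSeries ℚ} (hx : x ≠ 0) :
    (laurentIncl x).order = x.order := by
  have hX : laurentIncl x ≠ 0 := laurentIncl_ne_zero hx
  apply le_antisymm
  · apply HahnSeries.order_le_of_coeff_ne_zero
    rw [laurentIncl_coeff]
    simpa using (HahnSeries.coeff_order_eq_zero.not.2 hx)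
  · by_contra hlt
    push_neg at hlt
    apply (HahnSeries.coeff_order_eq_zero.not.2 hX)
    rw [laurentIncl_coeff, HahnSeries.coeff_eq_zero_of_lt_order hlt, map_zero]

lemma laurentIncl_leadingCoeff {x : LaurentSeries ℚ} (hx : x ≠ 0) :
    (laurentIncl x).leadingCoeff = algebraMap ℚ ℝ x.leadingCoeff := by
  rw [HahnSeries.leadingCoeff_eq, HahnSeries.leadingCoeff_eq, laurentIncl_order hx,
    laurentIncl_coeff]

lemma exists_rep (c : LaurentSeries ℚ) (hc : c ≠ 0) (k : ℤ) (hk : c.order = 2*k) :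
    ∃ z : LaurentSeries ℚ, c = HahnSeries.C c.leadingCoeff * (z * z) := by
  set L := c.leadingCoeff with hL
  have hL0 : L ≠ 0 := HahnSeries.leadingCoeff_ne_zero.mpr hc
  set f := c.powerSeriesPart with hf
  have hcf : PowerSeries.constantCoeff f = L := by
    rw [← PowerSeries.coeff_zero_eq_constantCoeff_apply, hf,
      LaurentSeries.powerSeriesPart_coeff]
    simp [hL, HahnSeries.leadingCoeff_eq]
  obtain ⟨s, hs⟩ := exists_sq_powerSeries (PowerSeries.C L⁻¹ * f) (by
    simp [hcf, inv_mul_cancel₀ hL0])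
  have hfs : f = PowerSeries.C L * (s * s) := by
    rw [hs, ← mul_assoc, ← map_mul, mul_inv_cancel₀ hL0, map_one, one_mul]
  refine ⟨HahnSeries.single k 1 * HahnSeries.ofPowerSeries ℤ ℚ s, ?_⟩
  have hrep := LaurentSeries.single_order_mul_powerSeriesPart c
  rw [← hrep, ← hf, hfs, hk]
  have hsing : (HahnSeries.single (2*k) (1:ℚ) : LaurentSeries ℚ)
      = HahnSeries.single k 1 * HahnSeries.single k 1 := by
    rw [HahnSeries.single_mul_single, mul_one]; ring_nf
  rw [hsing, map_mul, map_mul, HahnSeries.ofPowerSeries_C]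
  ring

lemma rat_sum_four_squares (q : ℚ) (hq : 0 < q) : ∃ r : Fin 4 → ℚ, ∑ p, r p ^ 2 = q := by
  obtain ⟨A, B, C, D, h⟩ := Nat.sum_four_squares (q.num.toNat * q.den)
  have hd : ((q.den : ℚ)) ≠ 0 := Nat.cast_ne_zero.mpr q.den_nz
  have hh : ((A:ℚ)^2 + B^2 + C^2 + D^2) = (q.num.toNat : ℚ) * q.den := by
    exact_mod_cast congrArg (fun m : ℕ => (m : ℚ)) h
  have hnum : (q.num.toNat : ℚ) = (q.num : ℚ) := by
    exact_mod_cast congrArg (fun z : ℤ => (z : ℚ)) (Int.toNat_of_nonneg (Rat.num_nonneg.mpr hq.le))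
  have hq' := Rat.num_div_den q
  have hq'' : (q.num : ℚ) = q * q.den := by
    exact ((eq_div_iff hd).mp hq'.symm).symm
  have key : ((A:ℚ)/q.den)^2 + ((B:ℚ)/q.den)^2 + ((C:ℚ)/q.den)^2 + ((D:ℚ)/q.den)^2 = q := by
    field_simp
    rw [hh, hnum, hq'']; ring
  exact ⟨![(A:ℚ)/q.den, (B:ℚ)/q.den, (C:ℚ)/q.den, (D:ℚ)/q.den], by
    simpa [Fin.sum_univ_four] using key⟩

lemma sum_two_point {M : Type*} [AddCommMonoid M] {n : ℕ} (i j : Fin n) (hij : i ≠ j)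
    (f : Fin n → M) (h : ∀ k, k ≠ i → k ≠ j → f k = 0) :
    ∑ k, f k = f i + f j := by
  classical
  have hk : ∀ k : Fin n, f k = (if k = i then f i else 0) + (if k = j then f j else 0) := by
    intro k
    by_cases h1 : k = i
    · subst h1; simp [hij]
    · by_cases h2 : k = j
      · subst h2; simp [h1]
      · simp [h1, h2, h k h1 h2]
  rw [Finset.sum_congr rfl fun k _ => hk k, Finset.sum_add_distrib]
  simp

/-- Every (diagonal, nondegenerate) quadratic form over `ℚ((t))` that becomes isotropic
over `ℝ((t))` is weakly isotropic over `ℚ((t))`; i.e. the extension `ℝ((t))/ℚ((t))` is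
totally positive. -/
theorem laurent_rat_real_totally_positive
    (n : ℕ) (a : Fin n → LaurentSeries ℚ) (ha : ∀ i, a i ≠ 0)
    (hiso : ∃ x : Fin n → LaurentSeries ℝ, (∃ i, x i ≠ 0) ∧
      ∑ i, laurentIncl (a i) * x i ^ 2 = 0) :
    ∃ (m : ℕ), 0 < m ∧ ∃ y : Fin m → Fin n → LaurentSeries ℚ,
      (∃ p i, y p i ≠ 0) ∧ ∑ p, ∑ i, a i * y p i ^ 2 = 0 := by
  classical
  obtain ⟨x, ⟨i₀, hi₀⟩, hsum⟩ := hiso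
  set T : Finset (Fin n) := Finset.univ.filter (fun i => x i ≠ 0) with hT
  have hTne : T.Nonempty := ⟨i₀, Finset.mem_filter.mpr ⟨Finset.mem_univ _, hi₀⟩⟩
  set w : Fin n → ℤ := fun i => (a i).order + 2 * (x i).order with hw
  set μ := T.inf' hTne w with hμ
  have horder : ∀ i, x i ≠ 0 → (laurentIncl (a i) * x i ^ 2).order = w i := by
    intro i hx
    have hA : laurentIncl (a i) ≠ 0 := laurentIncl_ne_zero (ha i)
    have hx2 : x i ^ 2 ≠ 0 := pow_ne_zero 2 hx
    rw [HahnSeries.order_mul hA hx2, laurentIncl_order (ha i), pow_two,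
      HahnSeries.order_mul hx hx, hw]
    ring
  set S : Finset (Fin n) := T.filter (fun i => w i = μ) with hS
  have hSsub : ∀ i ∈ S, x i ≠ 0 ∧ w i = μ := by
    intro i hi
    simp only [hS, hT, Finset.mem_filter, Finset.mem_univ, true_and] at hi
    exact ⟨hi.1, hi.2⟩
  have hSne : S.Nonempty := by
    obtain ⟨i, hiT, hieq⟩ := T.exists_mem_eq_inf' hTne w
    refine ⟨i, ?_⟩
    simp only [hS, Finset.mem_filter]
    exact ⟨hiT, hieq.symm⟩
  -- the leading-coefficient identity at order μ
  have hzero : ∑ i ∈ S, (algebraMap ℚ ℝ (a i).leadingCoeff) * (x i).leadingCoeff ^ 2 = 0 := by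
    have h1 : (∑ i, laurentIncl (a i) * x i ^ 2).coeff μ
        = ∑ i, (laurentIncl (a i) * x i ^ 2).coeff μ :=
      map_sum (HahnSeries.coeff.addMonoidHom μ) _ Finset.univ
    rw [hsum] at h1
    have h2 : ∀ i ∈ S, (laurentIncl (a i) * x i ^ 2).coeff μ
        = (algebraMap ℚ ℝ (a i).leadingCoeff) * (x i).leadingCoeff ^ 2 := by
      intro i hi
      obtain ⟨hx, hwi⟩ := hSsub i hi
      have hA : laurentIncl (a i) ≠ 0 := laurentIncl_ne_zero (ha i)
      have h3 : μ = (laurentIncl (a i)).order + (x i ^ 2).order := by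
        rw [← hwi, ← horder i hx, HahnSeries.order_mul hA (pow_ne_zero 2 hx)]
      have h4 : (x i ^ 2).leadingCoeff = (x i).leadingCoeff ^ 2 := by
        rw [pow_two, HahnSeries.leadingCoeff_eq, HahnSeries.order_mul hx hx,
          HahnSeries.coeff_mul_order_add_order]
        exact (pow_two _).symm
      rw [h3, HahnSeries.coeff_mul_order_add_order, laurentIncl_leadingCoeff (ha i), h4]
    have h5 : ∀ i ∈ Finset.univ, i ∉ S → (laurentIncl (a i) * x i ^ 2).coeff μ = 0 := by
      intro i _ hiS
      by_cases hx : x i = 0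
      · simp [hx]
      · have hiT : i ∈ T := Finset.mem_filter.mpr ⟨Finset.mem_univ _, hx⟩
        have hlt : μ < w i := by
          refine lt_of_le_of_ne (Finset.inf'_le w hiT) ?_
          intro hcon
          exact hiS (by simp only [hS, Finset.mem_filter]; exact ⟨hiT, hcon.symm⟩)
        exact HahnSeries.coeff_eq_zero_of_lt_order (by rw [horder i hx]; exact hlt)
    calc ∑ i ∈ S, (algebraMap ℚ ℝ (a i).leadingCoeff) * (x i).leadingCoeff ^ 2
        = ∑ i ∈ S, (laurentIncl (a i) * x i ^ 2).coeff μ :=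
          (Finset.sum_congr rfl h2).symm
      _ = ∑ i, (laurentIncl (a i) * x i ^ 2).coeff μ :=
          Finset.sum_subset (Finset.subset_univ S) h5
      _ = 0 := by rw [← h1, HahnSeries.coeff_zero]
  -- sign extraction
  have hlcx : ∀ i ∈ S, (0:ℝ) < (x i).leadingCoeff ^ 2 := by
    intro i hi
    have hx := (hSsub i hi).1
    exact lt_of_le_of_ne (sq_nonneg _)
      (Ne.symm (pow_ne_zero 2 (HahnSeries.leadingCoeff_ne_zero.mpr hx)))
  have hlcane : ∀ i, (a i).leadingCoeff ≠ 0 := fun i => HahnSeries.leadingCoeff_ne_zero.mpr (ha i)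
  have hcast : ∀ q : ℚ, algebraMap ℚ ℝ q = (q : ℝ) := fun q => by simp
  have hpos : ∃ i ∈ S, 0 < (a i).leadingCoeff := by
    by_contra hcon
    push_neg at hcon
    have hlt : 0 < ∑ i ∈ S, -((algebraMap ℚ ℝ (a i).leadingCoeff) * (x i).leadingCoeff ^ 2) := by
      refine Finset.sum_pos (fun i hi => ?_) hSne
      have h7 : (a i).leadingCoeff < 0 := lt_of_le_of_ne (hcon i hi) (hlcane i)
      have h8 : (algebraMap ℚ ℝ (a i).leadingCoeff) < 0 := by
        rw [hcast]; exact_mod_cast h7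
      have := mul_neg_of_neg_of_pos h8 (hlcx i hi)
      linarith
    rw [Finset.sum_neg_distrib, hzero, neg_zero] at hlt
    exact lt_irrefl 0 hlt
  have hneg : ∃ j ∈ S, (a j).leadingCoeff < 0 := by
    by_contra hcon
    push_neg at hcon
    have hlt : 0 < ∑ i ∈ S, (algebraMap ℚ ℝ (a i).leadingCoeff) * (x i).leadingCoeff ^ 2 := by
      refine Finset.sum_pos (fun i hi => ?_) hSne
      have h7 : 0 < (a i).leadingCoeff := lt_of_le_of_ne (hcon i hi) (Ne.symm (hlcane i))
      have h8 : 0 < (algebraMap ℚ ℝ (a i).leadingCoeff) := by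
        rw [hcast]; exact_mod_cast h7
      exact mul_pos h8 (hlcx i hi)
    rw [hzero] at hlt
    exact lt_irrefl 0 hlt
  obtain ⟨i, hiS, hipos⟩ := hpos
  obtain ⟨j, hjS, hjneg⟩ := hneg
  have hij : i ≠ j := fun h => by rw [h] at hipos; linarith
  obtain ⟨hxine, hwi⟩ := hSsub i hiS
  obtain ⟨hxjne, hwj⟩ := hSsub j hjS
  have hwi' : (a i).order + 2 * (x i).order = μ := by rw [← hwi, hw]
  have hwj' : (a j).order + 2 * (x j).order = μ := by rw [← hwj, hw]
  set k : ℤ := (x i).order - (x j).order with hk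
  have horda : (a j).order = (a i).order + 2*k := by rw [hk]; omega
  -- the construction
  set c : LaurentSeries ℚ := -(a j) * (a i)⁻¹ with hc
  have hcne : c ≠ 0 := mul_ne_zero (neg_ne_zero.mpr (ha j)) (inv_ne_zero (ha i))
  have hmulc : a i * c = -(a j) := by
    rw [hc, mul_comm, mul_assoc, inv_mul_cancel₀ (ha i), mul_one]
  have hordc : c.order = 2*k := by
    have h8 : (a i * c).order = (a i).order + c.order := HahnSeries.order_mul (ha i) hcne
    rw [hmulc, HahnSeries.order_neg] at h8
    omega
  have hlcc : 0 < c.leadingCoeff := by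
    have h9 := HahnSeries.coeff_mul_order_add_order (a i) c
    have h10 : (a i).order + c.order = (a j).order := by omega
    rw [h10, hmulc, HahnSeries.coeff_neg, ← HahnSeries.leadingCoeff_eq] at h9
    by_contra hcon
    push_neg at hcon
    nlinarith [h9, hipos, hjneg]
  obtain ⟨z, hz⟩ := exists_rep c hcne k hordc
  obtain ⟨r, hr⟩ := rat_sum_four_squares c.leadingCoeff hlcc
  refine ⟨4, by norm_num, fun p i' =>
    if i' = i then HahnSeries.C (r p) * z else if i' = j then HahnSeries.C (2⁻¹:ℚ) else 0,
    ⟨0, j, ?_⟩, ?_⟩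
  · simp only [if_neg (Ne.symm hij), if_pos rfl]
    exact HahnSeries.C_ne_zero (by norm_num)
  · have hrow : ∀ p : Fin 4, (∑ i', a i' *
        (if i' = i then HahnSeries.C (r p) * z else if i' = j then HahnSeries.C (2⁻¹:ℚ) else 0) ^ 2)
        = HahnSeries.C ((r p)^2) * (a i * (z*z)) + HahnSeries.C ((2⁻¹:ℚ)^2) * a j := by
      intro p
      rw [sum_two_point i j hij _ (fun l hl1 hl2 => by simp [hl1, hl2])]
      rw [if_pos rfl, if_neg (Ne.symm hij), if_pos rfl, map_pow, map_pow]
      ring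
    rw [Finset.sum_congr rfl (fun p _ => hrow p), Finset.sum_add_distrib, ← Finset.sum_mul,
      ← map_sum, hr, Finset.sum_const, Finset.card_univ, Fintype.card_fin]
    have h11 : (4:ℕ) • (HahnSeries.C ((2⁻¹:ℚ)^2) * a j) = a j := by
      rw [nsmul_eq_mul]
      have h12 : ((4:ℕ) : LaurentSeries ℚ) = HahnSeries.C ((4:ℕ):ℚ) :=
        (map_natCast (HahnSeries.C (R := ℚ) (Γ := ℤ)) 4).symm
      rw [h12, ← mul_assoc, ← map_mul]
      norm_num
    rw [h11]
    linear_combination hmulc - (a i) * hz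
end

section
/- Let K/F be a field extension of formally real fields and suppose every quadratic form over F that is isotropic over K is weakly isotropic over F. Let A be a central simple F-algebra with orthogonal involution σ of the first kind, assume K/F is a finite Galois extension of 2-power degree. If σ ⊗ 1 on A ⊗_F K is weakly isotropic, then σ is weakly isotropic over F. -/
set_option synthInstance.maxHeartbeats 1000000

open TensorProduct

open TensorProduct Finset

section FR
variable {F : Type*} [Field F]

/-- In a field where `-1` is not a sum of squares, a finite sum of squares is zero
only if each term is zero. -/
lemma aux_sq_sum_zero (hFR : ¬ IsSumSq (-1 : F)) {ι : Type*} [Fintype ι]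
    (t : ι → F) (h : ∑ i, t i ^ 2 = 0) : ∀ i, t i = 0 := by
  classical
  intro i
  by_contra ht
  apply hFR
  set u : ι → F := fun j => t j * (t i)⁻¹ with hu
  have hsum : ∑ j, u j ^ 2 = 0 := by
    have : ∑ j, u j ^ 2 = (∑ j, t j ^ 2) * ((t i)⁻¹) ^ 2 := by
      rw [Finset.sum_mul]; exact Finset.sum_congr rfl fun j _ => by rw [hu, mul_pow]
    rw [this, h, zero_mul]
  have hui : u i ^ 2 = 1 := by
    rw [hu]; simp [mul_inv_cancel₀ ht]
  have hsplit : u i ^ 2 + ∑ j ∈ Finset.univ.erase i, u j ^ 2 = 0 := by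
    rw [Finset.add_sum_erase _ (fun j => u j ^ 2) (Finset.mem_univ i)]; exact hsum
  have : ∑ j ∈ Finset.univ.erase i, u j * u j = -1 := by
    have h1 : ∑ j ∈ Finset.univ.erase i, u j ^ 2 = -1 := by
      rw [hui] at hsplit; linear_combination hsplit
    rw [← h1]; exact Finset.sum_congr rfl fun j _ => (sq (u j)).symm
  rw [← this]
  exact IsSumSq.sum_mul_self _ _

end FR
lemma sos_descent {F K : Type*} [Field F] [Field K] [Algebra F K]
    (hFR : ¬ IsSumSq (-1 : F))
    (htp : ∀ (n : ℕ) (a : Fin n → F), (∀ i, a i ≠ 0) →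
      (∃ x : Fin n → K, (∃ i, x i ≠ 0) ∧ ∑ i, algebraMap F K (a i) * x i ^ 2 = 0) →
      ∃ (m : ℕ), 0 < m ∧ ∃ y : Fin m → Fin n → F,
        (∃ p i, y p i ≠ 0) ∧ ∑ p, ∑ i, a i * y p i ^ 2 = 0)
    (d : F) (hd : d ≠ 0) {N : ℕ} (c : Fin N → K)
    (hc : algebraMap F K d = ∑ i, c i ^ 2) :
    ∃ (k : ℕ) (s : Fin k → F), d = ∑ l, s l ^ 2 := by
  classical
  set a : Fin (N + 1) → F := Fin.snoc (fun _ => (1 : F)) (-d) with ha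
  have ha0 : ∀ i, a i ≠ 0 := by
    intro i
    refine Fin.lastCases ?_ ?_ i
    · simp [ha, neg_ne_zero, hd]
    · intro j; simp [ha]
  have hiso : ∃ x : Fin (N + 1) → K, (∃ i, x i ≠ 0) ∧
      ∑ i, algebraMap F K (a i) * x i ^ 2 = 0 := by
    refine ⟨Fin.snoc c 1, ⟨Fin.last N, by simp⟩, ?_⟩
    rw [Fin.sum_univ_castSucc]
    simp only [ha, Fin.snoc_castSucc, Fin.snoc_last, map_one, one_mul, one_pow, mul_one, map_neg]
    rw [← hc]
    ring
  obtain ⟨m, hm, y, ⟨p0, i0, hy0⟩, hsum⟩ := htp (N + 1) a ha0 hiso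
  set S1 : F := ∑ p, ∑ i : Fin N, y p i.castSucc ^ 2 with hS1
  set S2 : F := ∑ p, y p (Fin.last N) ^ 2 with hS2
  have h1 : S1 - d * S2 = 0 := by
    rw [← hsum, hS1, hS2, Finset.mul_sum, ← Finset.sum_sub_distrib]
    refine Finset.sum_congr rfl fun p _ => ?_
    rw [Fin.sum_univ_castSucc]
    simp only [ha, Fin.snoc_castSucc, Fin.snoc_last, one_mul]
    ring
  by_cases h2 : S2 = 0
  · exfalso
    have hlast : ∀ p, y p (Fin.last N) = 0 :=
      aux_sq_sum_zero hFR (fun p => y p (Fin.last N)) (by rw [← hS2]; exact h2)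
    have hS10 : S1 = 0 := by rw [h2, mul_zero, sub_zero] at h1; exact h1
    have hcast : ∀ q : Fin m × Fin N, y q.1 q.2.castSucc = 0 := by
      have := aux_sq_sum_zero hFR (fun q : Fin m × Fin N => y q.1 q.2.castSucc)
        (by rw [Fintype.sum_prod_type]; exact hS10)
      exact this
    have : y p0 i0 = 0 := by
      refine Fin.lastCases ?_ ?_ i0
      · exact hlast p0
      · intro j; exact hcast (p0, j)
    exact hy0 this
  · -- S2 ≠ 0 : d = S1 * S2 * (S2⁻¹)^2 is a sum of squares
    have hd' : d = S1 * S2 * (S2⁻¹) ^ 2 := by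
      have hS1d : S1 = d * S2 := by linear_combination h1
      field_simp [hS1d]
      linear_combination -hS1d
    set I := (Fin m × Fin N) × Fin m with hI
    have hprod : S1 * S2 = ∑ q : I, (y q.1.1 q.1.2.castSucc * y q.2 (Fin.last N)) ^ 2 := by
      have e1 : (∑ q : I, (y q.1.1 q.1.2.castSucc * y q.2 (Fin.last N)) ^ 2)
          = ∑ i : Fin m × Fin N, ∑ j : Fin m, (y i.1 i.2.castSucc * y j (Fin.last N)) ^ 2 :=
        Fintype.sum_prod_type _
      have e2 : (∑ i : Fin m × Fin N, y i.1 i.2.castSucc ^ 2)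
          = ∑ p : Fin m, ∑ i : Fin N, y p i.castSucc ^ 2 := Fintype.sum_prod_type _
      rw [e1, hS1, hS2, ← e2, Finset.sum_mul_sum]
      exact Finset.sum_congr rfl fun i _ => Finset.sum_congr rfl fun j _ => (mul_pow _ _ _).symm
    have hdsum : d = ∑ q : I, (y q.1.1 q.1.2.castSucc * y q.2 (Fin.last N) * S2⁻¹) ^ 2 := by
      rw [hd', hprod, Finset.sum_mul]
      exact Finset.sum_congr rfl fun q _ => (mul_pow _ _ _).symm
    refine ⟨Fintype.card I, fun l => (y ((Fintype.equivFin I).symm l).1.1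
      ((Fintype.equivFin I).symm l).1.2.castSucc * (y ((Fintype.equivFin I).symm l).2 (Fin.last N))
      * S2⁻¹), ?_⟩
    rw [hdsum]
    exact (Equiv.sum_comp (Fintype.equivFin I).symm
      (fun q : I => (y q.1.1 q.1.2.castSucc * y q.2 (Fin.last N) * S2⁻¹) ^ 2)).symm
lemma trace_basis (F K : Type*) [Field F] [Field K] [Algebra F K]
    [FiniteDimensional F K] [IsGalois F K] [Invertible (2 : F)] :
    ∃ (b : Module.Basis (Fin (Module.finrank F K)) F K),
      (∀ j k, j ≠ k → Algebra.traceForm F K (b j) (b k) = 0) ∧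
      (∀ j, Algebra.traceForm F K (b j) (b j) ≠ 0) := by
  obtain ⟨b, hb⟩ := LinearMap.BilinForm.exists_orthogonal_basis
    (LinearMap.BilinForm.isSymm_iff.mp (Algebra.traceForm_isSymm (R := F) (S := K)))
  refine ⟨b, fun j k hjk => hb hjk, fun j hj => ?_⟩
  have hzero : ∀ x : K, Algebra.traceForm F K (b j) x = 0 := by
    intro x
    have hx : Algebra.traceForm F K (b j) = 0 := by
      apply b.ext
      intro i
      by_cases h : j = i
      · rw [← h]; exact hj
      · exact hb h
    rw [hx]; rfl
  have := (traceForm_nondegenerate F K).1 (b j) hzero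
  exact b.ne_zero j this

lemma trace_sq_sos (F K : Type*) [Field F] [Field K] [Algebra F K]
    [FiniteDimensional F K] [IsGalois F K] (x : K) :
    ∃ (N : ℕ) (c : Fin N → K),
      algebraMap F K (Algebra.trace F K (x * x)) = ∑ i, c i ^ 2 := by
  refine ⟨Fintype.card (K ≃ₐ[F] K), fun i => (Fintype.equivFin (K ≃ₐ[F] K)).symm i x, ?_⟩
  rw [trace_eq_sum_automorphisms]
  rw [← Equiv.sum_comp (Fintype.equivFin (K ≃ₐ[F] K)).symm (fun g : K ≃ₐ[F] K => g (x * x))]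
  exact Finset.sum_congr rfl fun i _ => by
    rw [map_mul, sq]

/-- Let `K/F` be a finite Galois extension of formally real fields of `2`-power degree
which is totally positive (in the quadratic-form characterization: every quadratic form
over `F` isotropic over `K` is weakly isotropic over `F`).  Let `A` be a central simple
`F`-algebra with an (orthogonal) involution `σ` of the first kind.  If `σ ⊗ 1` is weakly
isotropic on `A ⊗[F] K`, then `σ` is weakly isotropic over `F`. -/
theorem weakly_isotropic_descent_galois_two_extension
    (F K : Type*) [Field F] [Field K] [Algebra F K]
    [FiniteDimensional F K] [IsGalois F K]
    (hdeg : ∃ m : ℕ, Module.finrank F K = 2 ^ m)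
    (hFR : ¬ IsSumSq (-1 : F)) (hKR : ¬ IsSumSq (-1 : K))
    (htp : ∀ (n : ℕ) (a : Fin n → F), (∀ i, a i ≠ 0) →
      (∃ x : Fin n → K, (∃ i, x i ≠ 0) ∧ ∑ i, algebraMap F K (a i) * x i ^ 2 = 0) →
      ∃ (m : ℕ), 0 < m ∧ ∃ y : Fin m → Fin n → F,
        (∃ p i, y p i ≠ 0) ∧ ∑ p, ∑ i, a i * y p i ^ 2 = 0)
    (A : Type*) [Ring A] [Algebra F A]
    [Algebra.IsCentral F A] [IsSimpleRing A] [FiniteDimensional F A]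
    (σ : A →ₗ[F] A)
    (hanti : ∀ x y : A, σ (x * y) = σ y * σ x)
    (hinv : ∀ x : A, σ (σ x) = x)
    (hwiK : ∃ (n : ℕ), 0 < n ∧ ∃ z : Fin n → A ⊗[F] K,
      (∀ m, z m ≠ 0) ∧
        ∑ m, (TensorProduct.map σ (LinearMap.id : K →ₗ[F] K)) (z m) * z m = 0) :
    ∃ (n : ℕ), 0 < n ∧ ∃ x : Fin n → A,
      (∀ m, x m ≠ 0) ∧ ∑ m, σ (x m) * x m = 0 := by
  classical
  -- `F` has characteristic ≠ 2
  have h2ne : (2 : F) ≠ 0 := by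
    intro h
    apply hFR
    have h1 : (-1 : F) = 1 * 1 + 0 := by linear_combination -h
    rw [h1]; exact IsSumSq.add (IsSumSq.mul_self 1) IsSumSq.zero
  haveI : Invertible (2 : F) := invertibleOfNonzero h2ne
  -- diagonalize the trace form of `K/F`
  obtain ⟨b, hborth, hbdiag⟩ := trace_basis F K
  set d : Fin (Module.finrank F K) → F := fun j => Algebra.traceForm F K (b j) (b j) with hd
  -- each diagonal entry is a sum of squares in `F`
  have hsos : ∀ j, ∃ (k : ℕ) (s : Fin k → F), d j = ∑ l, s l ^ 2 := by
    intro j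
    obtain ⟨N, c, hc⟩ := trace_sq_sos F K (b j)
    refine sos_descent hFR htp (d j) (hbdiag j) c ?_
    exact hc
  choose k s hs using hsos
  -- coordinates of `A ⊗ K` with respect to the basis `b`
  set ψ : Fin (Module.finrank F K) → (A ⊗[F] K →ₗ[F] A) := fun j =>
    (TensorProduct.rid F A).toLinearMap ∘ₗ LinearMap.lTensor A (b.coord j) with hψ
  have hψ_tmul : ∀ (j) (a : A) (x : K), ψ j (a ⊗ₜ[F] x) = b.repr x j • a := by
    intro j a x
    simp [hψ, LinearMap.lTensor_tmul, TensorProduct.rid_tmul, Module.Basis.coord_apply]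
  have hrep : ∀ z : A ⊗[F] K, ∑ j, (ψ j z) ⊗ₜ[F] b j = z := by
    intro z
    induction z using TensorProduct.induction_on with
    | zero => simp
    | tmul a x =>
      simp only [hψ_tmul]
      simp_rw [TensorProduct.smul_tmul]
      rw [← TensorProduct.tmul_sum]
      congr 1
      exact b.sum_repr x
    | add u v hu hv =>
      simp only [map_add, TensorProduct.add_tmul, Finset.sum_add_distrib, hu, hv]
  -- applying `id ⊗ trace`
  set Φ : A ⊗[F] K →ₗ[F] A :=
    (TensorProduct.rid F A).toLinearMap ∘ₗ LinearMap.lTensor A (Algebra.trace F K) with hΦ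
  have hΦ_tmul : ∀ (a : A) (x : K), Φ (a ⊗ₜ[F] x) = Algebra.trace F K x • a := by
    intro a x
    simp [hΦ, LinearMap.lTensor_tmul, TensorProduct.rid_tmul]
  have hkey : ∀ z : A ⊗[F] K,
      Φ ((TensorProduct.map σ (LinearMap.id : K →ₗ[F] K)) z * z)
        = ∑ j, d j • (σ (ψ j z) * ψ j z) := by
    intro z
    conv_lhs => rw [← hrep z]
    rw [map_sum]
    simp only [TensorProduct.map_tmul, LinearMap.id_coe, id_eq]
    rw [Finset.sum_mul_sum, map_sum]
    refine Finset.sum_congr rfl fun j _ => ?_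
    rw [map_sum]
    simp only [Algebra.TensorProduct.tmul_mul_tmul, hΦ_tmul]
    rw [Finset.sum_eq_single j]
    · rfl
    · intro i _ hij
      have h0 : Algebra.trace F K (b j * b i) = 0 := by
        exact hborth j i (Ne.symm hij)
      rw [h0, zero_smul]
    · intro h; exact absurd (Finset.mem_univ j) h
  -- combine
  obtain ⟨n, hn, z, hz, hzsum⟩ := hwiK
  have hΦ0 : ∑ m, ∑ j, d j • (σ (ψ j (z m)) * ψ j (z m)) = 0 := by
    have : ∑ m, Φ ((TensorProduct.map σ (LinearMap.id : K →ₗ[F] K)) (z m) * z m) = 0 := by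
      rw [← map_sum, hzsum, map_zero]
    rw [← this]
    exact Finset.sum_congr rfl fun m _ => (hkey (z m)).symm
  have hexp : ∀ (w : A) (j), d j • (σ w * w) = ∑ l : Fin (k j), σ (s j l • w) * (s j l • w) := by
    intro w j
    rw [hs j, Finset.sum_smul]
    refine Finset.sum_congr rfl fun l _ => ?_
    rw [map_smul, smul_mul_smul_comm, ← sq]
  set ι := Fin n × (Σ j : Fin (Module.finrank F K), Fin (k j)) with hι
  set X : ι → A := fun q => s q.2.1 q.2.2 • ψ q.2.1 (z q.1) with hX
  have hXsum : ∑ q : ι, σ (X q) * X q = 0 := by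
    rw [Fintype.sum_prod_type, ← hΦ0]
    refine Finset.sum_congr rfl fun m _ => ?_
    rw [← Finset.univ_sigma_univ, Finset.sum_sigma]
    exact Finset.sum_congr rfl fun j _ => (hexp (ψ j (z m)) j).symm
  have hwit : ∃ q : ι, X q ≠ 0 := by
    have m0 : Fin n := ⟨0, hn⟩
    have hj : ∃ j, ψ j (z m0) ≠ 0 := by
      by_contra h
      push_neg at h
      apply hz m0
      rw [← hrep (z m0)]
      simp [h]
    obtain ⟨j, hj⟩ := hj
    have hl : ∃ l, s j l ≠ 0 := by
      by_contra h
      push_neg at h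
      apply hbdiag j
      rw [show Algebra.traceForm F K (b j) (b j) = d j from rfl, hs j]
      simp [h]
    obtain ⟨l, hl⟩ := hl
    exact ⟨(m0, ⟨j, l⟩), smul_ne_zero hl hj⟩
  obtain ⟨q0, hq0⟩ := hwit
  set Sf : Finset ι := Finset.univ.filter (fun q => X q ≠ 0) with hSf
  have hq0S : q0 ∈ Sf := Finset.mem_filter.mpr ⟨Finset.mem_univ _, hq0⟩
  refine ⟨Sf.card, Finset.card_pos.mpr ⟨q0, hq0S⟩,
    fun m => X ((Sf.equivFin.symm m : Sf) : ι), fun m => ?_, ?_⟩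
  · exact (Finset.mem_filter.mp (Sf.equivFin.symm m).2).2
  · have e1 : ∑ m : Fin Sf.card, σ (X ((Sf.equivFin.symm m : Sf) : ι))
        * X ((Sf.equivFin.symm m : Sf) : ι)
        = ∑ q : Sf, σ (X (q : ι)) * X (q : ι) :=
      Equiv.sum_comp Sf.equivFin.symm (fun q : Sf => σ (X (q : ι)) * X (q : ι))
    rw [e1, Finset.sum_coe_sort Sf (fun q => σ (X q) * X q)]
    rw [← hXsum]
    refine Finset.sum_subset (Finset.subset_univ Sf) ?_
    intro q _ hq
    have : X q = 0 := by
      by_contra hne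
      exact hq (Finset.mem_filter.mpr ⟨Finset.mem_univ _, hne⟩)
    rw [this, mul_zero]
end
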